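/- arXiv:2511.10895 — 4 statements merged into one kernel-verified Lean document; each statement's English description precedes it below -/
import Mathlib

section
/- Every (2P_3, C_4, C_6, C_7, 3-pentagon)-free graph is (3PC, proper wheel)-free, i.e., it contains no induced subgraph that is a theta, a pyramid, a prism, or a proper wheel. -/
namespace Paper

open SimpleGraph

variable {V : Type} {W : Type}

/-- `G` contains no induced copy of `H` (there is no graph embedding of `H` into `G`). -/
def IndFree (G : SimpleGraph V) (H : SimpleGraph W) : Prop :=
  IsEmpty (H ↪g G)

/-- `2P₃`: the disjoint union of two paths on three vertices. -/
def twoP3 : SimpleGraph (Fin 3 ⊕ Fin 3) :=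
  SimpleGraph.fromRel (fun u v =>
    match u, v with
    | Sum.inl a, Sum.inl b => (pathGraph 3).Adj a b
    | Sum.inr a, Sum.inr b => (pathGraph 3).Adj a b
    | _, _ => False)

/-- `4K₁`: the edgeless graph on four vertices. -/
def fourK1 : SimpleGraph (Fin 4) := ⊥

/-- The cycle on `n` vertices (for `n ≥ 3`). -/
def cycleG (n : ℕ) : SimpleGraph (ZMod n) :=
  SimpleGraph.fromRel (fun u v => v = u + 1)

/-- The graph `T₀`: vertices `0,…,8` stand for `a₀,a₁,b₀,b₁,b₂,b₃,c₁,c₂,c₃`. -/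
def T0 : SimpleGraph (Fin 9) :=
  SimpleGraph.fromRel (fun u v =>
    (u, v) ∈ ([(0,1),(0,2),(0,4),(0,5),(1,3),(1,4),(1,5),(2,6),(3,6),
               (4,7),(5,8),(6,7),(6,8),(7,8)] : List (Fin 9 × Fin 9)))

/-- The `t`-pentagon: `Sum.inl ()` is the vertex `a`, `Sum.inr (Sum.inl i)` is `bᵢ`,
and `Sum.inr (Sum.inr i)` is `cᵢ`. -/
def pentagon (t : ℕ) : SimpleGraph (Unit ⊕ Fin t ⊕ Fin t) :=
  SimpleGraph.fromRel (fun u v =>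
    match u, v with
    | Sum.inl _, Sum.inr (Sum.inl _) => True
    | Sum.inr (Sum.inl i), Sum.inr (Sum.inr j) => i = j
    | Sum.inr (Sum.inr _), Sum.inr (Sum.inr _) => True
    | _, _ => False)

/-- `X` is complete to `Y` in `G`. -/
def CompleteTo (G : SimpleGraph V) (X Y : Set V) : Prop :=
  ∀ x ∈ X, ∀ y ∈ Y, G.Adj x y

/-- `X` is anticomplete to `Y` in `G`. -/
def AnticompleteTo (G : SimpleGraph V) (X Y : Set V) : Prop :=
  ∀ x ∈ X, ∀ y ∈ Y, ¬ G.Adj x y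

/-- A simplicial vertex: its neighborhood is a clique. -/
def IsSimplicial (G : SimpleGraph V) (v : V) : Prop :=
  G.IsClique (G.neighborSet v)

/-- A universal vertex: adjacent to all other vertices. -/
def IsUniversal (G : SimpleGraph V) (v : V) : Prop :=
  ∀ w, w ≠ v → G.Adj v w




/-- A 5-basket partition `(A; B 0, B 1, B 2; C 0, C 1, C 2; F)` of `Q`. -/
def IsFiveBasketPartition (Q : SimpleGraph W) (A : Set W) (B C : Fin 3 → Set W)
    (F : Set W) : Prop :=
  (∀ i, Disjoint A (B i)) ∧ (∀ i, Disjoint A (C i)) ∧ Disjoint A F ∧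
  (∀ i j, i ≠ j → Disjoint (B i) (B j)) ∧
  (∀ i j, i ≠ j → Disjoint (C i) (C j)) ∧
  (∀ i j, Disjoint (B i) (C j)) ∧
  (∀ i, Disjoint (B i) F) ∧ (∀ i, Disjoint (C i) F) ∧
  (A ∪ (⋃ i, B i) ∪ (⋃ i, C i) ∪ F = Set.univ) ∧
  Q.IsClique A ∧ (∀ i, Q.IsClique (B i)) ∧ (∀ i, Q.IsClique (C i)) ∧ Q.IsClique F ∧
  A.Nonempty ∧ (∀ i, (B i).Nonempty) ∧ (∀ i, (C i).Nonempty) ∧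
  (∀ i j, i ≠ j → AnticompleteTo Q (B i) (B j)) ∧
  (∀ i j, i ≠ j → CompleteTo Q (C i) (C j)) ∧
  (∀ i, AnticompleteTo Q A (C i)) ∧
  (∀ i, CompleteTo Q (B i) (C i)) ∧
  (∀ i j, i ≠ j → AnticompleteTo Q (B i) (C j)) ∧
  (∃ istar : Fin 3,
    (∀ i, i ≠ istar → CompleteTo Q A (B i)) ∧
    (∀ a ∈ A, ∀ a' ∈ A,
      Q.neighborSet a ∩ B istar ⊆ Q.neighborSet a' ∩ B istar ∨
      Q.neighborSet a' ∩ B istar ⊆ Q.neighborSet a ∩ B istar) ∧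
    (∃ a ∈ A, B istar ⊆ Q.neighborSet a)) ∧
  (∃ jstar : Fin 3,
    CompleteTo Q F (B jstar ∪ C jstar ∪ F)ᶜ ∧
    AnticompleteTo Q F (B jstar ∪ C jstar))

/-- A 5-basket. -/
def IsFiveBasket (Q : SimpleGraph W) : Prop :=
  ∃ (A : Set W) (B C : Fin 3 → Set W) (F : Set W), IsFiveBasketPartition Q A B C F

/-- All conditions of a `t`-villa partition except that the parts exhaust the vertex set. -/
def VillaCore {t : ℕ} (Q : SimpleGraph W) (A : Set W) (B C : Fin t → Set W) : Prop :=
  (∀ i, Disjoint A (B i)) ∧ (∀ i, Disjoint A (C i)) ∧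
  (∀ i j, i ≠ j → Disjoint (B i) (B j)) ∧
  (∀ i j, i ≠ j → Disjoint (C i) (C j)) ∧
  (∀ i j, Disjoint (B i) (C j)) ∧
  Q.IsClique A ∧ (∀ i, Q.IsClique (B i)) ∧ (∀ i, Q.IsClique (C i)) ∧
  A.Nonempty ∧ (∀ i, (B i).Nonempty) ∧ (∀ i, (C i).Nonempty) ∧
  (∀ i, CompleteTo Q A (B i)) ∧ (∀ i, AnticompleteTo Q A (C i)) ∧
  (∀ i j, i ≠ j → AnticompleteTo Q (B i) (B j)) ∧
  (∀ i j, i ≠ j → CompleteTo Q (C i) (C j)) ∧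
  (∀ i j, i ≠ j → AnticompleteTo Q (B i) (C j)) ∧
  (∀ i, ∀ b ∈ B i, ∀ b' ∈ B i,
     Q.neighborSet b ∩ C i ⊆ Q.neighborSet b' ∩ C i ∨
     Q.neighborSet b' ∩ C i ⊆ Q.neighborSet b ∩ C i) ∧
  (∀ i, ∀ b ∈ B i, (Q.neighborSet b ∩ C i).Nonempty) ∧
  (∀ i, ∃ b ∈ B i, C i ⊆ Q.neighborSet b)

/-- A `t`-villa partition `(A; B 0,…,B (t-1); C 0,…,C (t-1))` of `Q`. -/
def IsVillaPartition {t : ℕ} (Q : SimpleGraph W) (A : Set W) (B C : Fin t → Set W) : Prop :=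
  VillaCore Q A B C ∧ A ∪ (⋃ i, B i) ∪ (⋃ i, C i) = Set.univ

/-- A `t`-villa. -/
def IsTVilla (t : ℕ) (Q : SimpleGraph W) : Prop :=
  ∃ (A : Set W) (B C : Fin t → Set W), IsVillaPartition Q A B C

/-- A villa: a `t`-villa for some `t ≥ 3`. -/
def IsVilla (Q : SimpleGraph W) : Prop :=
  ∃ t, 3 ≤ t ∧ IsTVilla t Q

/-- A `t`-mansion partition `(A; B; C; F; X; Y)` of `Q`. -/
def IsMansionPartition {t : ℕ} (Q : SimpleGraph W) (A : Set W) (B C : Fin t → Set W)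
    (F X Y : Set W) : Prop :=
  VillaCore Q A B C ∧
  Disjoint A F ∧ Disjoint A X ∧ Disjoint A Y ∧
  (∀ i, Disjoint (B i) F) ∧ (∀ i, Disjoint (B i) X) ∧ (∀ i, Disjoint (B i) Y) ∧
  (∀ i, Disjoint (C i) F) ∧ (∀ i, Disjoint (C i) X) ∧ (∀ i, Disjoint (C i) Y) ∧
  Disjoint F X ∧ Disjoint F Y ∧ Disjoint X Y ∧
  (A ∪ (⋃ i, B i) ∪ (⋃ i, C i) ∪ F ∪ X ∪ Y = Set.univ) ∧
  Q.IsClique F ∧ Q.IsClique X ∧ Q.IsClique Y ∧ F.Nonempty ∧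
  (∃ jstar : Fin t,
    CompleteTo Q F A ∧
    (∀ i, i ≠ jstar → CompleteTo Q F (B i)) ∧
    (∀ i, i ≠ jstar → CompleteTo Q F (C i)) ∧
    AnticompleteTo Q F (B jstar) ∧ AnticompleteTo Q F (C jstar) ∧
    CompleteTo Q (B jstar) (C jstar) ∧
    CompleteTo Q X A ∧ CompleteTo Q X (B jstar) ∧
    (∀ i, i ≠ jstar → AnticompleteTo Q X (B i)) ∧
    (∀ i, AnticompleteTo Q X (C i))) ∧
  CompleteTo Q F X ∧ CompleteTo Q F Y ∧
  AnticompleteTo Q X Y ∧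
  (∀ i, CompleteTo Q Y (C i)) ∧
  AnticompleteTo Q Y A ∧ (∀ i, AnticompleteTo Q Y (B i))

/-- A `t`-mansion. -/
def IsTMansion (t : ℕ) (Q : SimpleGraph W) : Prop :=
  ∃ (A : Set W) (B C : Fin t → Set W) (F X Y : Set W),
    IsMansionPartition Q A B C F X Y

/-- A mansion: a `t`-mansion for some `t ≥ 3`. -/
def IsMansion (Q : SimpleGraph W) : Prop :=
  ∃ t, 3 ≤ t ∧ IsTMansion t Q

/-- A `t`-frame partition of `Q`. -/
def IsFramePartition {t : ℕ} (Q : SimpleGraph W) (A : Set W) (B C : Fin t → Set W) : Prop :=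
  (∀ i, Disjoint A (B i)) ∧ (∀ i, Disjoint A (C i)) ∧
  (∀ i j, i ≠ j → Disjoint (B i) (B j)) ∧
  (∀ i j, i ≠ j → Disjoint (C i) (C j)) ∧
  (∀ i j, Disjoint (B i) (C j)) ∧
  (A ∪ (⋃ i, B i) ∪ (⋃ i, C i) = Set.univ) ∧
  A.Nonempty ∧ (∀ i, (B i).Nonempty) ∧ (∀ i, (C i).Nonempty) ∧
  (∀ a ∈ A, ∃ i j : Fin t, i ≠ j ∧ (∃ b ∈ B i, Q.Adj a b) ∧ (∃ b ∈ B j, Q.Adj a b)) ∧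
  (∀ i, AnticompleteTo Q A (C i)) ∧
  (∀ i j, i ≠ j → AnticompleteTo Q (B i) (B j)) ∧
  (∀ i j, i ≠ j → CompleteTo Q (C i) (C j)) ∧
  (∀ i j, i ≠ j → AnticompleteTo Q (B i) (C j)) ∧
  (∀ i, ∀ b ∈ B i, ∃ a ∈ A, Q.Adj b a) ∧
  (∀ i, ∀ b ∈ B i, ∃ c ∈ C i, Q.Adj b c) ∧
  (∀ i, ∀ c ∈ C i, ∃ b ∈ B i, Q.Adj c b)

/-- A `k`-ring partition of `Q` (indices modulo `k`). -/
def IsRingPartition {k : ℕ} (Q : SimpleGraph W) (X : ZMod k → Set W) : Prop :=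
  (∀ i j, i ≠ j → Disjoint (X i) (X j)) ∧
  (⋃ i, X i) = Set.univ ∧
  (∀ i, (X i).Nonempty) ∧
  (∀ i, ∀ u ∈ X i, X i ⊆ insert u (Q.neighborSet u)) ∧
  (∀ i, ∀ u ∈ X i, ∀ u' ∈ X i,
     insert u (Q.neighborSet u) ⊆ insert u' (Q.neighborSet u') ∨
     insert u' (Q.neighborSet u') ⊆ insert u (Q.neighborSet u)) ∧
  (∀ i, ∀ u ∈ X i, insert u (Q.neighborSet u) ⊆ X (i-1) ∪ X i ∪ X (i+1)) ∧
  (∀ i, ∃ u ∈ X i, X (i-1) ∪ X i ∪ X (i+1) ⊆ insert u (Q.neighborSet u))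

/-- A `k`-ring. -/
def IsRing (k : ℕ) (Q : SimpleGraph W) : Prop :=
  ∃ X : ZMod k → Set W, IsRingPartition Q X

/-- A 5-crown. -/
def IsFiveCrown (Q : SimpleGraph W) : Prop :=
  ∃ X : ZMod 5 → Set W, IsRingPartition Q X ∧
    ∃ istar : ZMod 5, CompleteTo Q (X (istar - 1)) (X (istar - 2)) ∧
      CompleteTo Q (X (istar + 1)) (X (istar + 2))


/-- A theta: two nonadjacent vertices joined by three internally disjoint induced paths of
length at least two, with no other vertices or edges. -/
def IsTheta (H : SimpleGraph W) : Prop :=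
  ∃ (a b : W) (P₁ P₂ P₃ : H.Walk a b),
    a ≠ b ∧ ¬ H.Adj a b ∧
    P₁.IsPath ∧ P₂.IsPath ∧ P₃.IsPath ∧
    2 ≤ P₁.length ∧ 2 ≤ P₂.length ∧ 2 ≤ P₃.length ∧
    (∀ v, v ∈ P₁.support → v ∈ P₂.support → v = a ∨ v = b) ∧
    (∀ v, v ∈ P₁.support → v ∈ P₃.support → v = a ∨ v = b) ∧
    (∀ v, v ∈ P₂.support → v ∈ P₃.support → v = a ∨ v = b) ∧
    (∀ v : W, v ∈ P₁.support ∨ v ∈ P₂.support ∨ v ∈ P₃.support) ∧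
    (∀ u v : W, H.Adj u v →
      s(u, v) ∈ P₁.edges ∨ s(u, v) ∈ P₂.edges ∨ s(u, v) ∈ P₃.edges)

/-- A pyramid: a triangle `b₁b₂b₃`, an apex `a`, and three paths from `a` to the `bᵢ`,
pairwise sharing only `a`, at most one of length one, with no other vertices or edges. -/
def IsPyramid (H : SimpleGraph W) : Prop :=
  ∃ (a b₁ b₂ b₃ : W) (P₁ : H.Walk a b₁) (P₂ : H.Walk a b₂) (P₃ : H.Walk a b₃),
    H.Adj b₁ b₂ ∧ H.Adj b₁ b₃ ∧ H.Adj b₂ b₃ ∧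
    P₁.IsPath ∧ P₂.IsPath ∧ P₃.IsPath ∧
    1 ≤ P₁.length ∧ 1 ≤ P₂.length ∧ 1 ≤ P₃.length ∧
    ((2 ≤ P₁.length ∧ 2 ≤ P₂.length) ∨ (2 ≤ P₁.length ∧ 2 ≤ P₃.length) ∨
      (2 ≤ P₂.length ∧ 2 ≤ P₃.length)) ∧
    (∀ v, v ∈ P₁.support → v ∈ P₂.support → v = a) ∧
    (∀ v, v ∈ P₁.support → v ∈ P₃.support → v = a) ∧
    (∀ v, v ∈ P₂.support → v ∈ P₃.support → v = a) ∧
    (∀ v : W, v ∈ P₁.support ∨ v ∈ P₂.support ∨ v ∈ P₃.support) ∧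
    (∀ u v : W, H.Adj u v →
      s(u, v) ∈ P₁.edges ∨ s(u, v) ∈ P₂.edges ∨ s(u, v) ∈ P₃.edges ∨
      s(u, v) = s(b₁, b₂) ∨ s(u, v) = s(b₁, b₃) ∨ s(u, v) = s(b₂, b₃))

/-- A prism: two vertex-disjoint triangles joined by three vertex-disjoint paths,
with no other vertices or edges. -/
def IsPrism (H : SimpleGraph W) : Prop :=
  ∃ (a₁ a₂ a₃ b₁ b₂ b₃ : W) (P₁ : H.Walk a₁ b₁) (P₂ : H.Walk a₂ b₂) (P₃ : H.Walk a₃ b₃),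
    H.Adj a₁ a₂ ∧ H.Adj a₁ a₃ ∧ H.Adj a₂ a₃ ∧
    H.Adj b₁ b₂ ∧ H.Adj b₁ b₃ ∧ H.Adj b₂ b₃ ∧
    P₁.IsPath ∧ P₂.IsPath ∧ P₃.IsPath ∧
    1 ≤ P₁.length ∧ 1 ≤ P₂.length ∧ 1 ≤ P₃.length ∧
    (∀ v, ¬ (v ∈ P₁.support ∧ v ∈ P₂.support)) ∧
    (∀ v, ¬ (v ∈ P₁.support ∧ v ∈ P₃.support)) ∧
    (∀ v, ¬ (v ∈ P₂.support ∧ v ∈ P₃.support)) ∧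
    (∀ v : W, v ∈ P₁.support ∨ v ∈ P₂.support ∨ v ∈ P₃.support) ∧
    (∀ u v : W, H.Adj u v →
      s(u, v) ∈ P₁.edges ∨ s(u, v) ∈ P₂.edges ∨ s(u, v) ∈ P₃.edges ∨
      s(u, v) = s(a₁, a₂) ∨ s(u, v) = s(a₁, a₃) ∨ s(u, v) = s(a₂, a₃) ∨
      s(u, v) = s(b₁, b₂) ∨ s(u, v) = s(b₁, b₃) ∨ s(u, v) = s(b₂, b₃))

/-- A proper wheel: a hole (an induced cycle on at least four vertices, covering all vertices
but one) plus one additional vertex `v` with at least three neighbors on the hole, such that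
the wheel is neither a universal wheel nor a twin wheel. -/
def IsProperWheel (H : SimpleGraph W) : Prop :=
  ∃ (v : W) (n : ℕ) (e : cycleG n ↪g H),
    4 ≤ n ∧ Set.range ⇑e = {v}ᶜ ∧
    3 ≤ (H.neighborSet v).ncard ∧
    H.neighborSet v ≠ {v}ᶜ ∧
    ¬ ∃ i : ZMod n, H.neighborSet v = {e i, e (i + 1), e (i + 2)}


instance (n : ℕ) : DecidableRel (cycleG n).Adj := fun a b =>
  decidable_of_iff (a ≠ b ∧ (b = a + 1 ∨ a = b + 1)) (by rw [cycleG, fromRel_adj])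

instance : DecidableRel (pathGraph 3).Adj := fun a b =>
  decidable_of_iff (a.val + 1 = b.val ∨ b.val + 1 = a.val) (by rw [pathGraph_adj])

private def tp3rel : Fin 3 ⊕ Fin 3 → Fin 3 ⊕ Fin 3 → Prop := fun u v =>
  match u, v with
  | Sum.inl a, Sum.inl b => (pathGraph 3).Adj a b
  | Sum.inr a, Sum.inr b => (pathGraph 3).Adj a b
  | _, _ => False

instance : ∀ a b, Decidable (tp3rel a b) := fun a b =>
  match a, b with
  | Sum.inl a, Sum.inl b => (inferInstance : Decidable ((pathGraph 3).Adj a b))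
  | Sum.inr a, Sum.inr b => (inferInstance : Decidable ((pathGraph 3).Adj a b))
  | Sum.inl _, Sum.inr _ => isFalse (fun h => h)
  | Sum.inr _, Sum.inl _ => isFalse (fun h => h)

instance : DecidableRel twoP3.Adj := fun a b =>
  decidable_of_iff (a ≠ b ∧ (tp3rel a b ∨ tp3rel b a)) (by rw [twoP3, fromRel_adj]; rfl)

private def pentrel : (Unit ⊕ Fin 3 ⊕ Fin 3) → (Unit ⊕ Fin 3 ⊕ Fin 3) → Prop := fun u v =>
  match u, v with
  | Sum.inl _, Sum.inr (Sum.inl _) => True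
  | Sum.inr (Sum.inl i), Sum.inr (Sum.inr j) => i = j
  | Sum.inr (Sum.inr _), Sum.inr (Sum.inr _) => True
  | _, _ => False

instance : ∀ a b, Decidable (pentrel a b) := fun a b =>
  match a, b with
  | Sum.inl _, Sum.inr (Sum.inl _) => isTrue trivial
  | Sum.inr (Sum.inl i), Sum.inr (Sum.inr j) => (inferInstance : Decidable (i = j))
  | Sum.inr (Sum.inr _), Sum.inr (Sum.inr _) => isTrue trivial
  | Sum.inl _, Sum.inl _ => isFalse (fun h => h)
  | Sum.inl _, Sum.inr (Sum.inr _) => isFalse (fun h => h)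
  | Sum.inr (Sum.inl _), Sum.inl _ => isFalse (fun h => h)
  | Sum.inr (Sum.inr _), Sum.inl _ => isFalse (fun h => h)
  | Sum.inr (Sum.inl _), Sum.inr (Sum.inl _) => isFalse (fun h => h)
  | Sum.inr (Sum.inr _), Sum.inr (Sum.inl _) => isFalse (fun h => h)

instance : DecidableRel (pentagon 3).Adj := fun a b =>
  decidable_of_iff (a ≠ b ∧ (pentrel a b ∨ pentrel b a)) (by rw [pentagon, fromRel_adj]; rcases a with _ | i | i <;> rcases b with _ | j | j <;> exact Iff.rfl)

example : (pentagon 3).Adj (Sum.inl ()) (Sum.inr (Sum.inl 1)) := by decide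

lemma natCast_zmod_inj {n x y : ℕ} (hx : x < n) (hy : y < n) :
    ((x : ZMod n) = (y : ZMod n)) ↔ x = y := by
  constructor
  · intro h
    have := congrArg ZMod.val h
    rwa [ZMod.val_cast_of_lt hx, ZMod.val_cast_of_lt hy] at this
  · rintro rfl; rfl

lemma cyc_adj {n : ℕ} (hn : 3 ≤ n) {i j : ℕ} (hi : i < n) (hj : j < n) :
    (cycleG n).Adj (i : ZMod n) (j : ZMod n) ↔
      (j = i + 1 ∨ i = j + 1 ∨ (i = 0 ∧ j = n - 1) ∨ (j = 0 ∧ i = n - 1)) := by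
  have key : ∀ x y : ℕ, x < n → y < n →
      (((y : ZMod n) = (x : ZMod n) + 1) ↔ (y = x + 1 ∨ (y = 0 ∧ x = n - 1))) := by
    intro x y hx hy
    rcases Nat.lt_or_ge (x + 1) n with h | h
    · rw [show ((x : ZMod n) + 1 : ZMod n) = ((x + 1 : ℕ) : ZMod n) by push_cast; ring,
        natCast_zmod_inj hy h]
      omega
    · have h0 : ((x : ZMod n) + 1 : ZMod n) = 0 := by
        rw [show ((x : ZMod n) + 1 : ZMod n) = ((x + 1 : ℕ) : ZMod n) by push_cast; ring,
          show x + 1 = n by omega, ZMod.natCast_self]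
      rw [h0]
      have h2 : ((y : ZMod n) = ((0 : ℕ) : ZMod n)) ↔ y = 0 := natCast_zmod_inj hy (by omega)
      simp only [Nat.cast_zero] at h2
      rw [h2]
      omega
  rw [cycleG, fromRel_adj, Ne, natCast_zmod_inj hi hj, key i j hi hj, key j i hj hi]
  omega

lemma getVert_mem_support {G : SimpleGraph V} {u v : V} (p : G.Walk u v) (i : ℕ) :
    p.getVert i ∈ p.support := by
  induction p generalizing i with
  | nil => cases i <;> simp [Walk.getVert]
  | cons h q ih =>
    cases i with
    | zero => simp [Walk.getVert]
    | succ n =>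
      simp only [Walk.getVert_cons_succ, Walk.support_cons, List.mem_cons]
      right; exact ih n

lemma getVert_injOn' {G : SimpleGraph V} {u v : V} {p : G.Walk u v} (hp : p.IsPath) :
    ∀ i, i ≤ p.length → ∀ j, j ≤ p.length → p.getVert i = p.getVert j → i = j := by
  induction p with
  | nil => intro i hi j hj _; simp at hi hj; omega
  | cons h q ih =>
    rw [Walk.cons_isPath_iff] at hp
    intro i hi j hj heq
    cases i with
    | zero =>
      cases j with
      | zero => rfl
      | succ m =>
        exfalso
        simp only [Walk.getVert_zero, Walk.getVert_cons_succ] at heq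
        exact hp.2 (heq ▸ getVert_mem_support q m)
    | succ n =>
      cases j with
      | zero =>
        exfalso
        simp only [Walk.getVert_zero, Walk.getVert_cons_succ] at heq
        exact hp.2 (heq ▸ getVert_mem_support q n)
      | succ m =>
        simp only [Walk.getVert_cons_succ] at heq
        simp only [Walk.length_cons] at hi hj
        have := ih hp.1 n (by omega) m (by omega) heq
        omega

lemma edge_mem_walk {G : SimpleGraph V} {u v x y : V} (p : G.Walk u v)
    (h : s(x, y) ∈ p.edges) :
    ∃ k, k < p.length ∧ ((x = p.getVert k ∧ y = p.getVert (k + 1)) ∨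
      (y = p.getVert k ∧ x = p.getVert (k + 1))) := by
  induction p with
  | nil => simp at h
  | cons hadj q ih =>
    rw [Walk.edges_cons, List.mem_cons] at h
    rcases h with h | h
    · refine ⟨0, by simp, ?_⟩
      rw [Sym2.eq_iff] at h
      simp only [Walk.getVert_zero, Walk.getVert_cons_succ, Walk.getVert_zero]
      rcases h with ⟨rfl, rfl⟩ | ⟨rfl, rfl⟩
      · exact Or.inl ⟨rfl, rfl⟩
      · exact Or.inr ⟨rfl, rfl⟩
    · obtain ⟨k, hk, hor⟩ := ih h
      refine ⟨k + 1, by simp only [Walk.length_cons]; omega, by simpa using hor⟩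

section Core
variable {H : SimpleGraph W}

/-- From a "combinatorial hole" of length `m ≥ 3`, an embedding of `cycleG m`. -/
lemma holeEmb {m : ℕ} (hm : 3 ≤ m) (f : ℕ → W)
    (hinj : ∀ i, i < m → ∀ j, j < m → f i = f j → i = j)
    (hadj : ∀ i, i < m → ∀ j, j < m → (H.Adj (f i) (f j) ↔
      (j = i + 1 ∨ i = j + 1 ∨ (i = 0 ∧ j = m - 1) ∨ (j = 0 ∧ i = m - 1)))) :
    Nonempty (cycleG m ↪g H) := by
  haveI : NeZero m := ⟨by omega⟩
  refine ⟨⟨⟨fun z => f z.val, ?_⟩, ?_⟩⟩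
  · intro x y h
    have := hinj x.val (ZMod.val_lt x) y.val (ZMod.val_lt y) h
    exact ZMod.val_injective m this
  · intro x y
    change H.Adj (f _) (f _) ↔ _
    rw [hadj x.val (ZMod.val_lt x) y.val (ZMod.val_lt y),
      ← cyc_adj hm (ZMod.val_lt x) (ZMod.val_lt y)]
    rw [ZMod.natCast_val x, ZMod.natCast_val y, ZMod.cast_id, ZMod.cast_id]

/-- Core lemma: in a (2P₃, C₄, C₆, C₇)-free graph every hole has length 5. -/
lemma hole5 (h2p3 : IndFree H twoP3) (h4 : IndFree H (cycleG 4))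
    (h6 : IndFree H (cycleG 6)) (h7 : IndFree H (cycleG 7))
    {m : ℕ} (hm : 4 ≤ m) (f : ℕ → W)
    (hinj : ∀ i, i < m → ∀ j, j < m → f i = f j → i = j)
    (hadj : ∀ i, i < m → ∀ j, j < m → (H.Adj (f i) (f j) ↔
      (j = i + 1 ∨ i = j + 1 ∨ (i = 0 ∧ j = m - 1) ∨ (j = 0 ∧ i = m - 1)))) :
    m = 5 := by
  by_contra hne
  have hcases : m = 4 ∨ m = 6 ∨ m = 7 ∨ 8 ≤ m := by omega
  rcases hcases with rfl | rfl | rfl | h8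
  · exact h4.elim (holeEmb (by omega) f hinj hadj).some
  · exact h6.elim (holeEmb (by omega) f hinj hadj).some
  · exact h7.elim (holeEmb (by omega) f hinj hadj).some
  · -- find an induced 2P₃ on f 0, f 1, f 2, f 4, f 5, f 6
    have hadj' : ∀ i j : ℕ, i < 7 → j < 7 → (H.Adj (f i) (f j) ↔ (j = i + 1 ∨ i = j + 1)) := by
      intro i j hi hj
      rw [hadj i (by omega) j (by omega)]
      omega
    refine h2p3.elim ⟨⟨fun x => match x with
      | Sum.inl k => f k.val
      | Sum.inr k => f (k.val + 4), ?_⟩, ?_⟩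
    · intro x y h
      rcases x with k | k <;> rcases y with l | l <;>
        simp only at h
      · have := hinj k.val (by omega) l.val (by omega) h
        exact congrArg Sum.inl (Fin.ext this)
      · exfalso
        have := hinj k.val (by omega) (l.val + 4) (by omega) h
        omega
      · exfalso
        have := hinj (k.val + 4) (by omega) l.val (by omega) h
        omega
      · have := hinj (k.val + 4) (by omega) (l.val + 4) (by omega) h
        exact congrArg Sum.inr (Fin.ext (by omega))
    · intro x y
      rcases x with k | k <;> rcases y with l | l <;> fin_cases k <;> fin_cases l <;>
        change H.Adj (f _) (f _) ↔ _ <;>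
        rw [hadj' _ _ (by omega) (by omega)] <;>
        constructor <;> intro hh <;> first | (exfalso; revert hh; decide) | decide | omega
end Core

section TwoPath
variable {H : SimpleGraph W}

/-- Two internally disjoint induced paths with the same endpoints, no edges between
their interiors, and nonadjacent endpoints, form a hole; hence total length 5. -/
lemma twoPath (h2p3 : IndFree H twoP3) (h4 : IndFree H (cycleG 4))
    (h6 : IndFree H (cycleG 6)) (h7 : IndFree H (cycleG 7))
    {p q : ℕ} (hp : 2 ≤ p) (hq : 2 ≤ q) (f g : ℕ → W)
    (hf0 : f 0 = g 0) (hfp : f p = g q)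
    (hab : ¬ H.Adj (f 0) (f p))
    (hfinj : ∀ i, i ≤ p → ∀ j, j ≤ p → f i = f j → i = j)
    (hginj : ∀ i, i ≤ q → ∀ j, j ≤ q → g i = g j → i = j)
    (hdisj : ∀ i, 0 < i → i < p → ∀ j, 0 < j → j < q → f i ≠ g j)
    (hfadj : ∀ i, i < p → H.Adj (f i) (f (i + 1)))
    (hgadj : ∀ i, i < q → H.Adj (g i) (g (i + 1)))
    (hfind : ∀ i, i ≤ p → ∀ j, j ≤ p → H.Adj (f i) (f j) → (j = i + 1 ∨ i = j + 1))
    (hgind : ∀ i, i ≤ q → ∀ j, j ≤ q → H.Adj (g i) (g j) → (j = i + 1 ∨ i = j + 1))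
    (hcross : ∀ i, 0 < i → i < p → ∀ j, 0 < j → j < q → ¬ H.Adj (f i) (g j)) :
    p + q = 5 := by
  set m := p + q with hm
  set h : ℕ → W := fun k => if k ≤ p then f k else g (m - k) with hh
  have hhval : ∀ k, k ≤ p → h k = f k := by intro k hk; simp [hh, hk]
  have hhval' : ∀ k, p < k → h k = g (m - k) := by
    intro k hk; simp only [hh]; rw [if_neg (by omega)]
  -- injectivity
  have hinj : ∀ i, i < m → ∀ j, j < m → h i = h j → i = j := by
    have aux : ∀ i, i < m → ∀ j, j < m → i ≤ p → ¬ j ≤ p → h i = h j → False := by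
      intro i hi j hj hip hjp he
      rw [hhval i hip, hhval' j (by omega)] at he
      have hj1 : 0 < m - j := by omega
      have hj2 : m - j < q := by omega
      rcases Nat.lt_or_ge 0 i with h0 | h0
      · rcases Nat.lt_or_ge i p with h1 | h1
        · exact hdisj i h0 h1 (m - j) hj1 hj2 he
        · have : i = p := by omega
          subst this
          rw [hfp] at he
          have := hginj q le_rfl (m - j) (by omega) he
          omega
      · have : i = 0 := by omega
        subst this
        rw [hf0] at he
        have := hginj 0 (by omega) (m - j) (by omega) he
        omega
    intro i hi j hj he
    by_cases hip : i ≤ p <;> by_cases hjp : j ≤ p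
    · rw [hhval i hip, hhval j hjp] at he; exact hfinj i hip j hjp he
    · exact absurd he (fun he => aux i hi j hj hip hjp he)
    · exact absurd he (fun he => aux j hj i hi hjp hip he.symm)
    · rw [hhval' i (by omega), hhval' j (by omega)] at he
      have := hginj (m - i) (by omega) (m - j) (by omega) he
      omega
  -- adjacency characterization
  have hadj : ∀ i, i < m → ∀ j, j < m → (H.Adj (h i) (h j) ↔
      (j = i + 1 ∨ i = j + 1 ∨ (i = 0 ∧ j = m - 1) ∨ (j = 0 ∧ i = m - 1))) := by
    have fwd : ∀ i, i < m → ∀ j, j < m → H.Adj (h i) (h j) →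
        (j = i + 1 ∨ i = j + 1 ∨ (i = 0 ∧ j = m - 1) ∨ (j = 0 ∧ i = m - 1)) := by
      have aux : ∀ i, i < m → ∀ j, j < m → i ≤ p → ¬ j ≤ p → H.Adj (h i) (h j) →
          (j = i + 1 ∨ i = j + 1 ∨ (i = 0 ∧ j = m - 1) ∨ (j = 0 ∧ i = m - 1)) := by
        intro i hi j hj hip hjp ha
        rw [hhval i hip, hhval' j (by omega)] at ha
        have hj1 : 0 < m - j := by omega
        have hj2 : m - j < q := by omega
        rcases Nat.lt_or_ge 0 i with h0 | h0
        · rcases Nat.lt_or_ge i p with h1 | h1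
          · exact absurd ha (hcross i h0 h1 (m - j) hj1 hj2)
          · have : i = p := by omega
            subst this
            rw [hfp] at ha
            have := hgind q le_rfl (m - j) (by omega) ha
            omega
        · have : i = 0 := by omega
          subst this
          rw [hf0] at ha
          have := hgind 0 (by omega) (m - j) (by omega) ha
          omega
      intro i hi j hj ha
      by_cases hip : i ≤ p <;> by_cases hjp : j ≤ p
      · rw [hhval i hip, hhval j hjp] at ha
        have := hfind i hip j hjp ha
        omega
      · exact aux i hi j hj hip hjp ha
      · have := aux j hj i hi hjp hip ha.symm
        omega
      · rw [hhval' i (by omega), hhval' j (by omega)] at ha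
        have := hgind (m - i) (by omega) (m - j) (by omega) ha
        omega
    have bwd : ∀ i, i < m → ∀ j, j < m →
        (j = i + 1 ∨ i = j + 1 ∨ (i = 0 ∧ j = m - 1) ∨ (j = 0 ∧ i = m - 1)) →
        H.Adj (h i) (h j) := by
      have consec : ∀ i, i + 1 < m → H.Adj (h i) (h (i + 1)) := by
        intro i hi1
        rcases Nat.lt_or_ge i p with h1 | h1
        · rw [hhval i (by omega), hhval (i + 1) (by omega)]
          exact hfadj i h1
        · rcases Nat.lt_or_ge p i with h2 | h2
          · rw [hhval' i (by omega), hhval' (i + 1) (by omega)]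
            have e : m - (i + 1) + 1 = m - i := by omega
            exact e ▸ (hgadj (m - (i + 1)) (by omega)).symm
          · have hip : i = p := by omega
            rw [hip, hhval p le_rfl, hfp, hhval' (p + 1) (by omega)]
            have e : m - (p + 1) + 1 = q := by omega
            exact e ▸ (hgadj (m - (p + 1)) (by omega)).symm
      have wrap : H.Adj (h 0) (h (m - 1)) := by
        rw [hhval 0 (by omega), hf0, hhval' (m - 1) (by omega)]
        have : m - (m - 1) = 1 := by omega
        rw [this]
        exact hgadj 0 (by omega)
      intro i hi j hj hc
      rcases hc with rfl | rfl | ⟨rfl, rfl⟩ | ⟨rfl, rfl⟩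
      · exact consec i (by omega)
      · exact (consec j (by omega)).symm
      · exact wrap
      · exact wrap.symm
    intro i hi j hj
    exact ⟨fwd i hi j hj, bwd i hi j hj⟩
  have := hole5 h2p3 h4 h6 h7 (by omega : 4 ≤ m) h hinj hadj
  omega

end TwoPath

lemma own_edge {G : SimpleGraph V} {a b : V} {P : G.Walk a b} (hP : P.IsPath)
    {i j : ℕ} (hi : i ≤ P.length) (hj : j ≤ P.length)
    (he : s(P.getVert i, P.getVert j) ∈ P.edges) : j = i + 1 ∨ i = j + 1 := by
  obtain ⟨k, hk, hor⟩ := edge_mem_walk P he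
  rcases hor with ⟨h1, h2⟩ | ⟨h1, h2⟩
  · have e1 := getVert_injOn' hP i hi k (by omega) h1
    have e2 := getVert_injOn' hP j hj (k + 1) (by omega) h2
    omega
  · have e1 := getVert_injOn' hP j hj k (by omega) h1
    have e2 := getVert_injOn' hP i hi (k + 1) (by omega) h2
    omega

section Theta
variable {H : SimpleGraph W}

lemma theta_pair (h2p3 : IndFree H twoP3) (h4 : IndFree H (cycleG 4))
    (h6 : IndFree H (cycleG 6)) (h7 : IndFree H (cycleG 7))
    {a b : W} (hab : ¬ H.Adj a b)
    (P Q R : H.Walk a b) (hP : P.IsPath) (hQ : Q.IsPath)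
    (hlP : 2 ≤ P.length) (hlQ : 2 ≤ Q.length)
    (hPQ : ∀ v, v ∈ P.support → v ∈ Q.support → v = a ∨ v = b)
    (hPR : ∀ v, v ∈ P.support → v ∈ R.support → v = a ∨ v = b)
    (hQR : ∀ v, v ∈ Q.support → v ∈ R.support → v = a ∨ v = b)
    (hedge : ∀ u v, H.Adj u v →
      s(u, v) ∈ P.edges ∨ s(u, v) ∈ Q.edges ∨ s(u, v) ∈ R.edges) :
    P.length + Q.length = 5 := by
  set p := P.length with hpd
  set q := Q.length with hqd
  have hPa : P.getVert 0 = a := P.getVert_zero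
  have hPb : P.getVert p = b := P.getVert_length
  have hQa : Q.getVert 0 = a := Q.getVert_zero
  have hQb : Q.getVert q = b := Q.getVert_length
  -- index facts
  have fidx : ∀ i, i ≤ p → (P.getVert i = a ∨ P.getVert i = b) → (i = 0 ∨ i = p) := by
    intro i hi hor
    rcases hor with h | h
    · left; exact getVert_injOn' hP i hi 0 (by omega) (h.trans hPa.symm)
    · right; exact getVert_injOn' hP i hi p (by omega) (h.trans hPb.symm)
  have gidx : ∀ i, i ≤ q → (Q.getVert i = a ∨ Q.getVert i = b) → (i = 0 ∨ i = q) := by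
    intro i hi hor
    rcases hor with h | h
    · left; exact getVert_injOn' hQ i hi 0 (by omega) (h.trans hQa.symm)
    · right; exact getVert_injOn' hQ i hi q (by omega) (h.trans hQb.symm)
  have hab' : ¬ H.Adj (P.getVert 0) (P.getVert p) := by rw [hPa, hPb]; exact hab
  refine twoPath h2p3 h4 h6 h7 hlP hlQ P.getVert Q.getVert (hPa.trans hQa.symm)
    (hPb.trans hQb.symm) hab'
    (getVert_injOn' hP) (getVert_injOn' hQ) ?_ (fun i hi => P.adj_getVert_succ hi)
    (fun i hi => Q.adj_getVert_succ hi) ?_ ?_ ?_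
  · -- hdisj
    intro i hi1 hi2 j hj1 hj2 he
    have := hPQ (P.getVert i) (getVert_mem_support P i) (he ▸ getVert_mem_support Q j)
    have := fidx i (by omega) this
    omega
  · -- hfind
    intro i hi j hj ha
    rcases hedge _ _ ha with h | h | h
    · exact own_edge hP hi hj h
    · exfalso
      have hfi := hPQ _ (getVert_mem_support P i) (Q.fst_mem_support_of_mem_edges h)
      have hfj := hPQ _ (getVert_mem_support P j) (Q.snd_mem_support_of_mem_edges h)
      have hi0 := fidx i hi hfi
      have hj0 := fidx j hj hfj
      have hne := ha.ne
      rcases hi0 with rfl | rfl <;> rcases hj0 with rfl | rfl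
      · exact hne rfl
      · exact hab' ha
      · exact hab' ha.symm
      · exact hne rfl
    · exfalso
      have hfi := hPR _ (getVert_mem_support P i) (R.fst_mem_support_of_mem_edges h)
      have hfj := hPR _ (getVert_mem_support P j) (R.snd_mem_support_of_mem_edges h)
      have hi0 := fidx i hi hfi
      have hj0 := fidx j hj hfj
      have hne := ha.ne
      rcases hi0 with rfl | rfl <;> rcases hj0 with rfl | rfl
      · exact hne rfl
      · exact hab' ha
      · exact hab' ha.symm
      · exact hne rfl
  · -- hgind
    intro i hi j hj ha
    rcases hedge _ _ ha with h | h | h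
    · exfalso
      have hfi := hPQ _ (P.fst_mem_support_of_mem_edges h) (getVert_mem_support Q i)
      have hfj := hPQ _ (P.snd_mem_support_of_mem_edges h) (getVert_mem_support Q j)
      have hi0 := gidx i hi hfi
      have hj0 := gidx j hj hfj
      have hne := ha.ne
      have hab'' : ¬ H.Adj (Q.getVert 0) (Q.getVert q) := by rw [hQa, hQb]; exact hab
      rcases hi0 with rfl | rfl <;> rcases hj0 with rfl | rfl
      · exact hne rfl
      · exact hab'' ha
      · exact hab'' ha.symm
      · exact hne rfl
    · exact own_edge hQ hi hj h
    · exfalso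
      have hfi := hQR _ (getVert_mem_support Q i) (R.fst_mem_support_of_mem_edges h)
      have hfj := hQR _ (getVert_mem_support Q j) (R.snd_mem_support_of_mem_edges h)
      have hi0 := gidx i hi hfi
      have hj0 := gidx j hj hfj
      have hne := ha.ne
      have hab'' : ¬ H.Adj (Q.getVert 0) (Q.getVert q) := by rw [hQa, hQb]; exact hab
      rcases hi0 with rfl | rfl <;> rcases hj0 with rfl | rfl
      · exact hne rfl
      · exact hab'' ha
      · exact hab'' ha.symm
      · exact hne rfl
  · -- hcross
    intro i hi1 hi2 j hj1 hj2 ha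
    rcases hedge _ _ ha with h | h | h
    · have := gidx j (by omega) (hPQ _ (P.snd_mem_support_of_mem_edges h) (getVert_mem_support Q j))
      omega
    · have := fidx i (by omega) (hPQ _ (getVert_mem_support P i) (Q.fst_mem_support_of_mem_edges h))
      omega
    · have := fidx i (by omega) (hPR _ (getVert_mem_support P i) (R.fst_mem_support_of_mem_edges h))
      omega

lemma noTheta (h2p3 : IndFree H twoP3) (h4 : IndFree H (cycleG 4))
    (h6 : IndFree H (cycleG 6)) (h7 : IndFree H (cycleG 7)) :
    ¬ IsTheta H := by
  rintro ⟨a, b, P₁, P₂, P₃, hne, hab, hp1, hp2, hp3, hl1, hl2, hl3, h12, h13, h23, hcov, hedge⟩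
  have e12 := theta_pair h2p3 h4 h6 h7 hab P₁ P₂ P₃ hp1 hp2 hl1 hl2 h12 h13 h23 hedge
  have e13 := theta_pair h2p3 h4 h6 h7 hab P₁ P₃ P₂ hp1 hp3 hl1 hl3 h13 h12
    (fun v hv hv' => h23 v hv' hv)
    (fun u v huv => by have := hedge u v huv; tauto)
  have e23 := theta_pair h2p3 h4 h6 h7 hab P₂ P₃ P₁ hp2 hp3 hl2 hl3 h23
    (fun v hv hv' => h12 v hv' hv) (fun v hv hv' => h13 v hv' hv)
    (fun u v huv => by have := hedge u v huv; tauto)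
  omega

end Theta

lemma path_ends_ne {G : SimpleGraph V} {u v : V} {P : G.Walk u v} (hP : P.IsPath)
    (hl : 1 ≤ P.length) : u ≠ v := by
  intro h
  have := getVert_injOn' hP 0 (by omega) P.length le_rfl (by simp [h])
  omega

section Prism
variable {H : SimpleGraph W}

lemma prism_pair (h2p3 : IndFree H twoP3) (h4 : IndFree H (cycleG 4))
    (h6 : IndFree H (cycleG 6)) (h7 : IndFree H (cycleG 7))
    {a1 a2 a3 b1 b2 b3 : W}
    (P : H.Walk a1 b1) (Q : H.Walk a2 b2) (R : H.Walk a3 b3)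
    (ta12 : H.Adj a1 a2) (ta13 : H.Adj a1 a3) (ta23 : H.Adj a2 a3)
    (tb12 : H.Adj b1 b2) (tb13 : H.Adj b1 b3) (tb23 : H.Adj b2 b3)
    (hP : P.IsPath) (hQ : Q.IsPath) (hR : R.IsPath)
    (hl1 : 1 ≤ P.length) (hl2 : 1 ≤ Q.length) (hl3 : 1 ≤ R.length)
    (hPQ : ∀ v, ¬ (v ∈ P.support ∧ v ∈ Q.support))
    (hPR : ∀ v, ¬ (v ∈ P.support ∧ v ∈ R.support))
    (hQR : ∀ v, ¬ (v ∈ Q.support ∧ v ∈ R.support))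
    (hedge : ∀ u v, H.Adj u v →
      s(u, v) ∈ P.edges ∨ s(u, v) ∈ Q.edges ∨ s(u, v) ∈ R.edges ∨
      s(u, v) = s(a1, a2) ∨ s(u, v) = s(a1, a3) ∨ s(u, v) = s(a2, a3) ∨
      s(u, v) = s(b1, b2) ∨ s(u, v) = s(b1, b3) ∨ s(u, v) = s(b2, b3)) :
    P.length + Q.length = 3 := by
  set p := P.length with hpd
  set q := Q.length with hqd
  have hPa : P.getVert 0 = a1 := P.getVert_zero
  have hPb : P.getVert p = b1 := P.getVert_length
  have hQa : Q.getVert 0 = a2 := Q.getVert_zero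
  have hQb : Q.getVert q = b2 := Q.getVert_length
  have mPi : ∀ i, P.getVert i ∈ P.support := getVert_mem_support P
  have mQi : ∀ i, Q.getVert i ∈ Q.support := getVert_mem_support Q
  have ma1P : a1 ∈ P.support := P.start_mem_support
  have mb1P : b1 ∈ P.support := P.end_mem_support
  have ma2Q : a2 ∈ Q.support := Q.start_mem_support
  have mb2Q : b2 ∈ Q.support := Q.end_mem_support
  have ma3R : a3 ∈ R.support := R.start_mem_support
  have mb3R : b3 ∈ R.support := R.end_mem_support
  have nPQ : ∀ x, x ∈ P.support → x ∈ Q.support → False := fun x h1 h2 => hPQ x ⟨h1, h2⟩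
  have nPR : ∀ x, x ∈ P.support → x ∈ R.support → False := fun x h1 h2 => hPR x ⟨h1, h2⟩
  have nQR : ∀ x, x ∈ Q.support → x ∈ R.support → False := fun x h1 h2 => hQR x ⟨h1, h2⟩
  have ne_a1b1 : a1 ≠ b1 := path_ends_ne hP hl1
  have ne_a2b2 : a2 ≠ b2 := path_ends_ne hQ hl2
  have fidx : ∀ i, i ≤ p → P.getVert i = a1 → i = 0 := fun i hi h =>
    getVert_injOn' hP i hi 0 (by omega) (h.trans hPa.symm)
  have fidx' : ∀ i, i ≤ p → P.getVert i = b1 → i = p := fun i hi h =>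
    getVert_injOn' hP i hi p le_rfl (h.trans hPb.symm)
  have gidx : ∀ i, i ≤ q → Q.getVert i = a2 → i = 0 := fun i hi h =>
    getVert_injOn' hQ i hi 0 (by omega) (h.trans hQa.symm)
  have gidx' : ∀ i, i ≤ q → Q.getVert i = b2 → i = q := fun i hi h =>
    getVert_injOn' hQ i hi q le_rfl (h.trans hQb.symm)
  -- "induced" property of P within the prism
  have Pind : ∀ i, i ≤ p → ∀ j, j ≤ p → H.Adj (P.getVert i) (P.getVert j) →
      j = i + 1 ∨ i = j + 1 := by
    intro i hi j hj ha
    rcases hedge _ _ ha with h | h | h | h | h | h | h | h | h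
    · exact own_edge hP hi hj h
    · exact absurd (nPQ _ (mPi i) (Q.fst_mem_support_of_mem_edges h)) not_false
    · exact absurd (nPR _ (mPi i) (R.fst_mem_support_of_mem_edges h)) not_false
    · rcases Sym2.eq_iff.mp h with ⟨h1, h2⟩ | ⟨h1, h2⟩
      · exact absurd (nPQ _ (mPi j) (by rw [h2]; exact ma2Q)) not_false
      · exact absurd (nPQ _ (mPi i) (by rw [h1]; exact ma2Q)) not_false
    · rcases Sym2.eq_iff.mp h with ⟨h1, h2⟩ | ⟨h1, h2⟩
      · exact absurd (nPR _ (mPi j) (by rw [h2]; exact ma3R)) not_false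
      · exact absurd (nPR _ (mPi i) (by rw [h1]; exact ma3R)) not_false
    · rcases Sym2.eq_iff.mp h with ⟨h1, h2⟩ | ⟨h1, h2⟩
      · exact absurd (nPQ _ (mPi i) (by rw [h1]; exact ma2Q)) not_false
      · exact absurd (nPR _ (mPi i) (by rw [h1]; exact ma3R)) not_false
    · rcases Sym2.eq_iff.mp h with ⟨h1, h2⟩ | ⟨h1, h2⟩
      · exact absurd (nPQ _ (mPi j) (by rw [h2]; exact mb2Q)) not_false
      · exact absurd (nPQ _ (mPi i) (by rw [h1]; exact mb2Q)) not_false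
    · rcases Sym2.eq_iff.mp h with ⟨h1, h2⟩ | ⟨h1, h2⟩
      · exact absurd (nPR _ (mPi j) (by rw [h2]; exact mb3R)) not_false
      · exact absurd (nPR _ (mPi i) (by rw [h1]; exact mb3R)) not_false
    · rcases Sym2.eq_iff.mp h with ⟨h1, h2⟩ | ⟨h1, h2⟩
      · exact absurd (nPQ _ (mPi i) (by rw [h1]; exact mb2Q)) not_false
      · exact absurd (nPR _ (mPi i) (by rw [h1]; exact mb3R)) not_false
  have Qind : ∀ i, i ≤ q → ∀ j, j ≤ q → H.Adj (Q.getVert i) (Q.getVert j) →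
      j = i + 1 ∨ i = j + 1 := by
    intro i hi j hj ha
    rcases hedge _ _ ha with h | h | h | h | h | h | h | h | h
    · exact absurd (nPQ _ (P.fst_mem_support_of_mem_edges h) (mQi i)) not_false
    · exact own_edge hQ hi hj h
    · exact absurd (nQR _ (mQi i) (R.fst_mem_support_of_mem_edges h)) not_false
    · rcases Sym2.eq_iff.mp h with ⟨h1, h2⟩ | ⟨h1, h2⟩
      · exact absurd (nPQ _ (by rw [h1]; exact ma1P) (mQi i)) not_false
      · exact absurd (nPQ _ (by rw [h2]; exact ma1P) (mQi j)) not_false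
    · rcases Sym2.eq_iff.mp h with ⟨h1, h2⟩ | ⟨h1, h2⟩
      · exact absurd (nPQ _ (by rw [h1]; exact ma1P) (mQi i)) not_false
      · exact absurd (nPQ _ (by rw [h2]; exact ma1P) (mQi j)) not_false
    · rcases Sym2.eq_iff.mp h with ⟨h1, h2⟩ | ⟨h1, h2⟩
      · exact absurd (nQR _ (mQi j) (by rw [h2]; exact ma3R)) not_false
      · exact absurd (nQR _ (mQi i) (by rw [h1]; exact ma3R)) not_false
    · rcases Sym2.eq_iff.mp h with ⟨h1, h2⟩ | ⟨h1, h2⟩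
      · exact absurd (nPQ _ (by rw [h1]; exact mb1P) (mQi i)) not_false
      · exact absurd (nPQ _ (by rw [h2]; exact mb1P) (mQi j)) not_false
    · rcases Sym2.eq_iff.mp h with ⟨h1, h2⟩ | ⟨h1, h2⟩
      · exact absurd (nPQ _ (by rw [h1]; exact mb1P) (mQi i)) not_false
      · exact absurd (nPQ _ (by rw [h2]; exact mb1P) (mQi j)) not_false
    · rcases Sym2.eq_iff.mp h with ⟨h1, h2⟩ | ⟨h1, h2⟩
      · exact absurd (nQR _ (mQi j) (by rw [h2]; exact mb3R)) not_false
      · exact absurd (nQR _ (mQi i) (by rw [h1]; exact mb3R)) not_false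
  have step : ∀ i, i ≤ p → H.Adj (P.getVert i) b2 → i = p := by
    intro i hi ha
    rcases hedge _ _ ha with h | h | h | h | h | h | h | h | h
    · exact absurd (nPQ _ (P.snd_mem_support_of_mem_edges h) mb2Q) not_false
    · exact absurd (nPQ _ (mPi i) (Q.fst_mem_support_of_mem_edges h)) not_false
    · exact absurd (nPR _ (mPi i) (R.fst_mem_support_of_mem_edges h)) not_false
    · rcases Sym2.eq_iff.mp h with ⟨h1, h2⟩ | ⟨h1, h2⟩
      · exact absurd h2.symm ne_a2b2
      · exact absurd (nPQ _ (mPi i) (by rw [h1]; exact ma2Q)) not_false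
    · rcases Sym2.eq_iff.mp h with ⟨h1, h2⟩ | ⟨h1, h2⟩
      · exact absurd (nQR _ mb2Q (by rw [h2]; exact ma3R)) not_false
      · exact absurd (nPR _ (mPi i) (by rw [h1]; exact ma3R)) not_false
    · rcases Sym2.eq_iff.mp h with ⟨h1, h2⟩ | ⟨h1, h2⟩
      · exact absurd (nPQ _ (mPi i) (by rw [h1]; exact ma2Q)) not_false
      · exact absurd (nPR _ (mPi i) (by rw [h1]; exact ma3R)) not_false
    · rcases Sym2.eq_iff.mp h with ⟨h1, h2⟩ | ⟨h1, h2⟩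
      · exact fidx' i hi h1
      · exact absurd (nPQ _ (mPi i) (by rw [h1]; exact mb2Q)) not_false
    · rcases Sym2.eq_iff.mp h with ⟨h1, h2⟩ | ⟨h1, h2⟩
      · exact absurd (nQR _ mb2Q (by rw [h2]; exact mb3R)) not_false
      · exact absurd (nPR _ (mPi i) (by rw [h1]; exact mb3R)) not_false
    · rcases Sym2.eq_iff.mp h with ⟨h1, h2⟩ | ⟨h1, h2⟩
      · exact absurd (nPQ _ (mPi i) (by rw [h1]; exact mb2Q)) not_false
      · exact absurd (nPR _ (mPi i) (by rw [h1]; exact mb3R)) not_false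
  have gstep : ∀ j, j ≤ q → H.Adj a1 (Q.getVert j) → j = 0 := by
    intro j hj ha
    rcases hedge _ _ ha with h | h | h | h | h | h | h | h | h
    · exact absurd (nPQ _ (P.snd_mem_support_of_mem_edges h) (mQi j)) not_false
    · exact absurd (nPQ _ ma1P (Q.fst_mem_support_of_mem_edges h)) not_false
    · exact absurd (nPR _ ma1P (R.fst_mem_support_of_mem_edges h)) not_false
    · rcases Sym2.eq_iff.mp h with ⟨h1, h2⟩ | ⟨h1, h2⟩
      · exact gidx j hj h2
      · exact absurd h1 ta12.ne
    · rcases Sym2.eq_iff.mp h with ⟨h1, h2⟩ | ⟨h1, h2⟩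
      · exact absurd (nQR _ (mQi j) (by rw [h2]; exact ma3R)) not_false
      · exact absurd h1 ta13.ne
    · rcases Sym2.eq_iff.mp h with ⟨h1, h2⟩ | ⟨h1, h2⟩
      · exact absurd h1 ta12.ne
      · exact absurd h1 ta13.ne
    · rcases Sym2.eq_iff.mp h with ⟨h1, h2⟩ | ⟨h1, h2⟩
      · exact absurd h1 ne_a1b1
      · exact absurd (nPQ _ ma1P (by rw [h1]; exact mb2Q)) not_false
    · rcases Sym2.eq_iff.mp h with ⟨h1, h2⟩ | ⟨h1, h2⟩
      · exact absurd h1 ne_a1b1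
      · exact absurd (nPR _ ma1P (by rw [h1]; exact mb3R)) not_false
    · rcases Sym2.eq_iff.mp h with ⟨h1, h2⟩ | ⟨h1, h2⟩
      · exact absurd (nPQ _ ma1P (by rw [h1]; exact mb2Q)) not_false
      · exact absurd (nPR _ ma1P (by rw [h1]; exact mb3R)) not_false
  set f : ℕ → W := fun k => if k ≤ p then P.getVert k else b2 with hf
  set g : ℕ → W := fun k => if k = 0 then a1 else Q.getVert (k - 1) with hg
  have hfval : ∀ k, k ≤ p → f k = P.getVert k := by intro k hk; simp [hf, hk]
  have hfb : ∀ k, p < k → f k = b2 := by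
    intro k hk; simp only [hf]; rw [if_neg (by omega)]
  have hgval : ∀ k, 0 < k → g k = Q.getVert (k - 1) := by
    intro k hk; simp only [hg]; rw [if_neg (by omega)]
  have hg0 : g 0 = a1 := by simp [hg]
  have key : (p + 1) + (q + 1) = 5 := by
    apply twoPath h2p3 h4 h6 h7 (by omega) (by omega) f g
    · rw [hfval 0 (by omega), hg0, hPa]
    · rw [hfb (p + 1) (by omega), hgval (q + 1) (by omega)]
      simp [hQb]
    · -- ¬ H.Adj a1 b2
      rw [hfval 0 (by omega), hfb (p + 1) (by omega), hPa]
      intro ha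
      rcases hedge _ _ ha with h | h | h | h | h | h | h | h | h
      · exact nPQ b2 (P.snd_mem_support_of_mem_edges h) mb2Q
      · exact nPQ a1 ma1P (Q.fst_mem_support_of_mem_edges h)
      · exact nPR a1 ma1P (R.fst_mem_support_of_mem_edges h)
      · rcases Sym2.eq_iff.mp h with ⟨h1, h2⟩ | ⟨h1, h2⟩
        · exact ne_a2b2 h2.symm
        · exact ta12.ne h1
      · rcases Sym2.eq_iff.mp h with ⟨h1, h2⟩ | ⟨h1, h2⟩
        · exact nQR b2 mb2Q (by rw [h2]; exact ma3R)
        · exact ta13.ne h1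
      · rcases Sym2.eq_iff.mp h with ⟨h1, h2⟩ | ⟨h1, h2⟩
        · exact ta12.ne h1
        · exact ta13.ne h1
      · rcases Sym2.eq_iff.mp h with ⟨h1, h2⟩ | ⟨h1, h2⟩
        · exact ne_a1b1 h1
        · exact nPQ a1 ma1P (by rw [h1]; exact mb2Q)
      · rcases Sym2.eq_iff.mp h with ⟨h1, h2⟩ | ⟨h1, h2⟩
        · exact ne_a1b1 h1
        · exact nPR a1 ma1P (by rw [h1]; exact mb3R)
      · rcases Sym2.eq_iff.mp h with ⟨h1, h2⟩ | ⟨h1, h2⟩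
        · exact nPQ a1 ma1P (by rw [h1]; exact mb2Q)
        · exact nPR a1 ma1P (by rw [h1]; exact mb3R)
    · -- f injective
      intro i hi j hj he
      rcases Nat.lt_or_ge i (p + 1) with h1 | h1 <;> rcases Nat.lt_or_ge j (p + 1) with h2 | h2
      · rw [hfval i (by omega), hfval j (by omega)] at he
        exact getVert_injOn' hP i (by omega) j (by omega) he
      · rw [hfval i (by omega), hfb j (by omega)] at he
        exact absurd (nPQ _ (mPi i) (by rw [he]; exact mb2Q)) not_false
      · rw [hfval j (by omega), hfb i (by omega)] at he
        exact absurd (nPQ _ (mPi j) (by rw [he.symm]; exact mb2Q)) not_false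
      · omega
    · -- g injective
      intro i hi j hj he
      rcases Nat.eq_zero_or_pos i with rfl | h1 <;> rcases Nat.eq_zero_or_pos j with rfl | h2
      · rfl
      · rw [hg0, hgval j h2] at he
        exact absurd (nPQ _ ma1P (by rw [he]; exact mQi (j - 1))) not_false
      · rw [hg0, hgval i h1] at he
        exact absurd (nPQ _ ma1P (by rw [he.symm]; exact mQi (i - 1))) not_false
      · rw [hgval i h1, hgval j h2] at he
        have := getVert_injOn' hQ (i - 1) (by omega) (j - 1) (by omega) he
        omega
    · -- interior disjointness
      intro i hi1 hi2 j hj1 hj2 he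
      rw [hfval i (by omega), hgval j (by omega)] at he
      exact nPQ _ (mPi i) (by rw [he]; exact mQi (j - 1))
    · -- f consecutive
      intro i hi
      rcases Nat.lt_or_ge i p with h1 | h1
      · rw [hfval i (by omega), hfval (i + 1) (by omega)]
        exact P.adj_getVert_succ h1
      · have hip : i = p := by omega
        rw [hip, hfval p le_rfl, hfb (p + 1) (by omega), hPb]
        exact tb12
    · -- g consecutive
      intro i hi
      rcases Nat.eq_zero_or_pos i with rfl | h1
      · rw [hg0, hgval 1 (by omega)]
        simpa [hQa] using ta12
      · rw [hgval i h1, hgval (i + 1) (by omega)]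
        have e : i + 1 - 1 = (i - 1) + 1 := by omega
        rw [e]
        exact Q.adj_getVert_succ (by omega)
    · -- f induced
      intro i hi j hj ha
      rcases Nat.lt_or_ge i (p + 1) with h1 | h1 <;> rcases Nat.lt_or_ge j (p + 1) with h2 | h2
      · rw [hfval i (by omega), hfval j (by omega)] at ha
        exact Pind i (by omega) j (by omega) ha
      · rw [hfval i (by omega), hfb j (by omega)] at ha
        have := step i (by omega) ha
        omega
      · rw [hfval j (by omega), hfb i (by omega)] at ha
        have := step j (by omega) ha.symm
        omega
      · rw [hfb i (by omega), hfb j (by omega)] at ha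
        exact absurd rfl ha.ne
    · -- g induced
      intro i hi j hj ha
      rcases Nat.eq_zero_or_pos i with rfl | h1 <;> rcases Nat.eq_zero_or_pos j with rfl | h2
      · exact absurd rfl ha.ne
      · rw [hg0, hgval j h2] at ha
        have := gstep (j - 1) (by omega) ha
        omega
      · rw [hg0, hgval i h1] at ha
        have := gstep (i - 1) (by omega) ha.symm
        omega
      · rw [hgval i h1, hgval j h2] at ha
        have := Qind (i - 1) (by omega) (j - 1) (by omega) ha
        omega
    · -- no cross edges
      intro i hi1 hi2 j hj1 hj2 ha
      rw [hfval i (by omega), hgval j hj1] at ha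
      rcases hedge _ _ ha with h | h | h | h | h | h | h | h | h
      · exact nPQ _ (P.fst_mem_support_of_mem_edges h) (by
          have := P.snd_mem_support_of_mem_edges h
          exact absurd (nPQ _ this (mQi (j - 1))) not_false)
      · exact nPQ _ (mPi i) (Q.fst_mem_support_of_mem_edges h)
      · exact nPR _ (mPi i) (R.fst_mem_support_of_mem_edges h)
      · rcases Sym2.eq_iff.mp h with ⟨h1, h2⟩ | ⟨h1, h2⟩
        · have := fidx i (by omega) h1; omega
        · exact nPQ _ (mPi i) (by rw [h1]; exact ma2Q)
      · rcases Sym2.eq_iff.mp h with ⟨h1, h2⟩ | ⟨h1, h2⟩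
        · have := fidx i (by omega) h1; omega
        · exact nPR _ (mPi i) (by rw [h1]; exact ma3R)
      · rcases Sym2.eq_iff.mp h with ⟨h1, h2⟩ | ⟨h1, h2⟩
        · exact nPQ _ (mPi i) (by rw [h1]; exact ma2Q)
        · exact nPR _ (mPi i) (by rw [h1]; exact ma3R)
      · rcases Sym2.eq_iff.mp h with ⟨h1, h2⟩ | ⟨h1, h2⟩
        · have := gidx' (j - 1) (by omega) h2; omega
        · exact nPQ _ (mPi i) (by rw [h1]; exact mb2Q)
      · rcases Sym2.eq_iff.mp h with ⟨h1, h2⟩ | ⟨h1, h2⟩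
        · exact nQR _ (mQi (j - 1)) (by rw [h2]; exact mb3R)
        · exact nPR _ (mPi i) (by rw [h1]; exact mb3R)
      · rcases Sym2.eq_iff.mp h with ⟨h1, h2⟩ | ⟨h1, h2⟩
        · exact nPQ _ (mPi i) (by rw [h1]; exact mb2Q)
        · exact nPR _ (mPi i) (by rw [h1]; exact mb3R)
  omega

lemma noPrism (h2p3 : IndFree H twoP3) (h4 : IndFree H (cycleG 4))
    (h6 : IndFree H (cycleG 6)) (h7 : IndFree H (cycleG 7)) :
    ¬ IsPrism H := by
  rintro ⟨a1, a2, a3, b1, b2, b3, P1, P2, P3, ta12, ta13, ta23, tb12, tb13, tb23,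
    hp1, hp2, hp3, hl1, hl2, hl3, h12, h13, h23, hcov, hedge⟩
  have e12 := prism_pair h2p3 h4 h6 h7 P1 P2 P3 ta12 ta13 ta23 tb12 tb13 tb23
    hp1 hp2 hp3 hl1 hl2 hl3 h12 h13 h23 hedge
  have e13 := prism_pair h2p3 h4 h6 h7 P1 P3 P2 ta13 ta12 ta23.symm tb13 tb12 tb23.symm
    hp1 hp3 hp2 hl1 hl3 hl2 h13 h12 (fun v hv => h23 v ⟨hv.2, hv.1⟩)
    (fun u v huv => by
      have := hedge u v huv
      rw [show s(a2, a3) = s(a3, a2) from Sym2.eq_swap,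
        show s(b2, b3) = s(b3, b2) from Sym2.eq_swap] at this
      tauto)
  have e23 := prism_pair h2p3 h4 h6 h7 P2 P3 P1 ta23 ta12.symm ta13.symm
    tb23 tb12.symm tb13.symm hp2 hp3 hp1 hl2 hl3 hl1 h23
    (fun v hv => h12 v ⟨hv.2, hv.1⟩) (fun v hv => h13 v ⟨hv.2, hv.1⟩)
    (fun u v huv => by
      have := hedge u v huv
      rw [show s(a1, a2) = s(a2, a1) from Sym2.eq_swap,
        show s(a1, a3) = s(a3, a1) from Sym2.eq_swap,
        show s(b1, b2) = s(b2, b1) from Sym2.eq_swap,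
        show s(b1, b3) = s(b3, b1) from Sym2.eq_swap] at this
      tauto)
  omega

end Prism

section C4
variable {H : SimpleGraph W}

/-- Four vertices forming an induced 4-cycle contradict `C₄`-freeness. -/
lemma c4_helper (h4 : IndFree H (cycleG 4)) (w0 w1 w2 w3 : W)
    (a01 : H.Adj w0 w1) (a12 : H.Adj w1 w2) (a23 : H.Adj w2 w3) (a30 : H.Adj w3 w0)
    (n02 : ¬ H.Adj w0 w2) (n13 : ¬ H.Adj w1 w3)
    (e02 : w0 ≠ w2) (e13 : w1 ≠ w3) : False := by
  have e01 : w0 ≠ w1 := a01.ne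
  have e12 : w1 ≠ w2 := a12.ne
  have e23 : w2 ≠ w3 := a23.ne
  have e03 : w0 ≠ w3 := fun h => a30.ne h.symm
  have a10 := a01.symm
  have a21 := a12.symm
  have a32 := a23.symm
  have a03 := a30.symm
  have n20 : ¬ H.Adj w2 w0 := fun h => n02 h.symm
  have n31 : ¬ H.Adj w3 w1 := fun h => n13 h.symm
  have n00 : ¬ H.Adj w0 w0 := H.irrefl
  have n11 : ¬ H.Adj w1 w1 := H.irrefl
  have n22 : ¬ H.Adj w2 w2 := H.irrefl
  have n33 : ¬ H.Adj w3 w3 := H.irrefl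
  set f : ℕ → W := fun k => if k = 0 then w0 else if k = 1 then w1 else if k = 2 then w2 else w3
    with hfd
  have f0 : f 0 = w0 := rfl
  have f1 : f 1 = w1 := rfl
  have f2 : f 2 = w2 := rfl
  have f3 : f 3 = w3 := rfl
  refine h4.elim (holeEmb (by omega) f ?_ ?_).some
  · intro i hi j hj he
    interval_cases i <;> interval_cases j <;>
      simp only [f0, f1, f2, f3] at he <;> first
      | rfl
      | (exact absurd he (by assumption))
      | (exact absurd he.symm (by assumption))
  · intro i hi j hj
    interval_cases i <;> interval_cases j <;> simp only [f0, f1, f2, f3] <;>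
      (constructor <;> intro h <;>
        first | omega | assumption | (exact absurd h (by assumption)) | (exfalso; rcases h with h | h | ⟨h1, h2⟩ | ⟨h1, h2⟩ <;> omega) | tauto)

end C4

section Pyramid
variable {H : SimpleGraph W}

/-- In a pyramid, a vertex of the path `Q` (other than `a`) adjacent to `br` must be `bq`. -/
lemma pyr_step {a bp bq br : W}
    (P : H.Walk a bp) (Q : H.Walk a bq) (R : H.Walk a br)
    (tpq : H.Adj bp bq) (tpr : H.Adj bp br) (tqr : H.Adj bq br)
    (hP : P.IsPath) (hQ : Q.IsPath) (hR : R.IsPath)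
    (hlP : 1 ≤ P.length) (hlQ : 1 ≤ Q.length) (hlR : 1 ≤ R.length)
    (hPQ : ∀ v, v ∈ P.support → v ∈ Q.support → v = a)
    (hPR : ∀ v, v ∈ P.support → v ∈ R.support → v = a)
    (hQR : ∀ v, v ∈ Q.support → v ∈ R.support → v = a)
    (hedge : ∀ u v, H.Adj u v → s(u, v) ∈ P.edges ∨ s(u, v) ∈ Q.edges ∨ s(u, v) ∈ R.edges ∨
      s(u, v) = s(bp, bq) ∨ s(u, v) = s(bp, br) ∨ s(u, v) = s(bq, br)) :
    ∀ i, 0 < i → i ≤ Q.length → H.Adj (Q.getVert i) br → i = Q.length := by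
  have hQa : Q.getVert 0 = a := Q.getVert_zero
  have hQb : Q.getVert Q.length = bq := Q.getVert_length
  have mQi : ∀ i, Q.getVert i ∈ Q.support := getVert_mem_support Q
  have mRi : ∀ i, R.getVert i ∈ R.support := getVert_mem_support R
  have ne_abp : a ≠ bp := path_ends_ne hP hlP
  have ne_abq : a ≠ bq := path_ends_ne hQ hlQ
  have ne_abr : a ≠ br := path_ends_ne hR hlR
  have mbpP : bp ∈ P.support := P.end_mem_support
  have mbqQ : bq ∈ Q.support := Q.end_mem_support
  have mbrR : br ∈ R.support := R.end_mem_support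
  have nbpQ : bp ∉ Q.support := fun h => ne_abp (hPQ bp mbpP h).symm
  have nbrQ : br ∉ Q.support := fun h => ne_abr (hQR br h mbrR).symm
  have Qidx0 : ∀ i, i ≤ Q.length → Q.getVert i = a → i = 0 := fun i hi h =>
    getVert_injOn' hQ i hi 0 (by omega) (h.trans hQa.symm)
  have Qidxq : ∀ i, i ≤ Q.length → Q.getVert i = bq → i = Q.length := fun i hi h =>
    getVert_injOn' hQ i hi Q.length le_rfl (h.trans hQb.symm)
  intro i hi0 hiq ha
  rcases hedge _ _ ha with h | h | h | h | h | h
  · have := Qidx0 i hiq (hPQ _ (P.fst_mem_support_of_mem_edges h) (mQi i))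
    omega
  · exact absurd (Q.snd_mem_support_of_mem_edges h) nbrQ
  · have := Qidx0 i hiq (hQR _ (mQi i) (R.fst_mem_support_of_mem_edges h))
    omega
  · rcases Sym2.eq_iff.mp h with ⟨h1, h2⟩ | ⟨h1, h2⟩
    · exact absurd (show bp ∈ Q.support by rw [← h1]; exact mQi i) nbpQ
    · exact absurd h2.symm tpr.ne
  · rcases Sym2.eq_iff.mp h with ⟨h1, h2⟩ | ⟨h1, h2⟩
    · exact absurd (show bp ∈ Q.support by rw [← h1]; exact mQi i) nbpQ
    · exact absurd (show br ∈ Q.support by rw [← h1]; exact mQi i) nbrQ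
  · rcases Sym2.eq_iff.mp h with ⟨h1, h2⟩ | ⟨h1, h2⟩
    · exact Qidxq i hiq h1
    · exact absurd (show br ∈ Q.support by rw [← h1]; exact mQi i) nbrQ

lemma pyr_noab {a bp bq br : W}
    (P : H.Walk a bp) (Q : H.Walk a bq) (R : H.Walk a br)
    (tpq : H.Adj bp bq) (tpr : H.Adj bp br) (tqr : H.Adj bq br)
    (hP : P.IsPath) (hQ : Q.IsPath) (hR : R.IsPath)
    (hlP : 1 ≤ P.length) (hlQ : 1 ≤ Q.length) (hlR : 2 ≤ R.length)
    (hPQ : ∀ v, v ∈ P.support → v ∈ Q.support → v = a)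
    (hPR : ∀ v, v ∈ P.support → v ∈ R.support → v = a)
    (hQR : ∀ v, v ∈ Q.support → v ∈ R.support → v = a)
    (hedge : ∀ u v, H.Adj u v → s(u, v) ∈ P.edges ∨ s(u, v) ∈ Q.edges ∨ s(u, v) ∈ R.edges ∨
      s(u, v) = s(bp, bq) ∨ s(u, v) = s(bp, br) ∨ s(u, v) = s(bq, br)) :
    ¬ H.Adj a br := by
  have ne_abp : a ≠ bp := path_ends_ne hP hlP
  have ne_abq : a ≠ bq := path_ends_ne hQ hlQ
  have ne_abr : a ≠ br := path_ends_ne hR (by omega)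
  have mbrR : br ∈ R.support := R.end_mem_support
  have nbrP : br ∉ P.support := fun h => ne_abr (hPR br h mbrR).symm
  have nbrQ : br ∉ Q.support := fun h => ne_abr (hQR br h mbrR).symm
  intro ha
  rcases hedge _ _ ha with h | h | h | h | h | h
  · exact absurd (P.snd_mem_support_of_mem_edges h) nbrP
  · exact absurd (Q.snd_mem_support_of_mem_edges h) nbrQ
  · have h' : s(R.getVert 0, R.getVert R.length) ∈ R.edges := by
      rw [R.getVert_zero, R.getVert_length]; exact h
    have := own_edge hR (Nat.zero_le _) le_rfl h'
    omega
  · rcases Sym2.eq_iff.mp h with ⟨h1, h2⟩ | ⟨h1, h2⟩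
    · exact ne_abp h1
    · exact ne_abq h1
  · rcases Sym2.eq_iff.mp h with ⟨h1, h2⟩ | ⟨h1, h2⟩
    · exact ne_abp h1
    · exact ne_abr h1
  · rcases Sym2.eq_iff.mp h with ⟨h1, h2⟩ | ⟨h1, h2⟩
    · exact ne_abq h1
    · exact ne_abr h1

lemma pyr_cross {a bp bq br : W}
    (P : H.Walk a bp) (Q : H.Walk a bq) (R : H.Walk a br)
    (tpq : H.Adj bp bq) (tpr : H.Adj bp br) (tqr : H.Adj bq br)
    (hP : P.IsPath) (hQ : Q.IsPath) (hR : R.IsPath)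
    (hlP : 1 ≤ P.length) (hlQ : 1 ≤ Q.length) (hlR : 1 ≤ R.length)
    (hPQ : ∀ v, v ∈ P.support → v ∈ Q.support → v = a)
    (hPR : ∀ v, v ∈ P.support → v ∈ R.support → v = a)
    (hQR : ∀ v, v ∈ Q.support → v ∈ R.support → v = a)
    (hedge : ∀ u v, H.Adj u v → s(u, v) ∈ P.edges ∨ s(u, v) ∈ Q.edges ∨ s(u, v) ∈ R.edges ∨
      s(u, v) = s(bp, bq) ∨ s(u, v) = s(bp, br) ∨ s(u, v) = s(bq, br)) :
    ∀ i, 0 < i → i ≤ Q.length → ∀ j, 0 < j → j < R.length →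
      ¬ H.Adj (Q.getVert i) (R.getVert j) := by
  have hQa : Q.getVert 0 = a := Q.getVert_zero
  have hRa : R.getVert 0 = a := R.getVert_zero
  have hRb : R.getVert R.length = br := R.getVert_length
  have mQi : ∀ i, Q.getVert i ∈ Q.support := getVert_mem_support Q
  have mRi : ∀ i, R.getVert i ∈ R.support := getVert_mem_support R
  have ne_abp : a ≠ bp := path_ends_ne hP hlP
  have ne_abq : a ≠ bq := path_ends_ne hQ hlQ
  have ne_abr : a ≠ br := path_ends_ne hR hlR
  have mbpP : bp ∈ P.support := P.end_mem_support
  have mbqQ : bq ∈ Q.support := Q.end_mem_support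
  have mbrR : br ∈ R.support := R.end_mem_support
  have nbpQ : bp ∉ Q.support := fun h => ne_abp (hPQ bp mbpP h).symm
  have nbrQ : br ∉ Q.support := fun h => ne_abr (hQR br h mbrR).symm
  have nbpR : bp ∉ R.support := fun h => ne_abp (hPR bp mbpP h).symm
  have Qidx0 : ∀ i, i ≤ Q.length → Q.getVert i = a → i = 0 := fun i hi h =>
    getVert_injOn' hQ i hi 0 (by omega) (h.trans hQa.symm)
  have Ridx0 : ∀ i, i ≤ R.length → R.getVert i = a → i = 0 := fun i hi h =>
    getVert_injOn' hR i hi 0 (by omega) (h.trans hRa.symm)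
  have Ridxr : ∀ i, i ≤ R.length → R.getVert i = br → i = R.length := fun i hi h =>
    getVert_injOn' hR i hi R.length le_rfl (h.trans hRb.symm)
  intro i hi0 hiq j hj0 hjr ha
  rcases hedge _ _ ha with h | h | h | h | h | h
  · have := Qidx0 i hiq (hPQ _ (P.fst_mem_support_of_mem_edges h) (mQi i))
    omega
  · have := Ridx0 j (by omega) (hQR _ (Q.snd_mem_support_of_mem_edges h) (mRi j))
    omega
  · have := Qidx0 i hiq (hQR _ (mQi i) (R.fst_mem_support_of_mem_edges h))
    omega
  · rcases Sym2.eq_iff.mp h with ⟨h1, h2⟩ | ⟨h1, h2⟩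
    · exact absurd (show bp ∈ Q.support by rw [← h1]; exact mQi i) nbpQ
    · exact absurd (show bp ∈ R.support by rw [← h2]; exact mRi j) nbpR
  · rcases Sym2.eq_iff.mp h with ⟨h1, h2⟩ | ⟨h1, h2⟩
    · exact absurd (show bp ∈ Q.support by rw [← h1]; exact mQi i) nbpQ
    · exact absurd (show br ∈ Q.support by rw [← h1]; exact mQi i) nbrQ
  · rcases Sym2.eq_iff.mp h with ⟨h1, h2⟩ | ⟨h1, h2⟩
    · have := Ridxr j (by omega) h2; omega
    · exact absurd (show br ∈ Q.support by rw [← h1]; exact mQi i) nbrQ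

lemma pyr_ind {a bp bq br : W}
    (P : H.Walk a bp) (Q : H.Walk a bq) (R : H.Walk a br)
    (tpq : H.Adj bp bq) (tpr : H.Adj bp br) (tqr : H.Adj bq br)
    (hP : P.IsPath) (hQ : Q.IsPath) (hR : R.IsPath)
    (hlP : 1 ≤ P.length) (hlQ : 1 ≤ Q.length) (hlR : 1 ≤ R.length)
    (hPQ : ∀ v, v ∈ P.support → v ∈ Q.support → v = a)
    (hPR : ∀ v, v ∈ P.support → v ∈ R.support → v = a)
    (hQR : ∀ v, v ∈ Q.support → v ∈ R.support → v = a)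
    (hedge : ∀ u v, H.Adj u v → s(u, v) ∈ P.edges ∨ s(u, v) ∈ Q.edges ∨ s(u, v) ∈ R.edges ∨
      s(u, v) = s(bp, bq) ∨ s(u, v) = s(bp, br) ∨ s(u, v) = s(bq, br)) :
    ∀ i, i ≤ Q.length → ∀ j, j ≤ Q.length → H.Adj (Q.getVert i) (Q.getVert j) →
      j = i + 1 ∨ i = j + 1 := by
  have ne_abp : a ≠ bp := path_ends_ne hP hlP
  have ne_abr : a ≠ br := path_ends_ne hR hlR
  have mQi : ∀ i, Q.getVert i ∈ Q.support := getVert_mem_support Q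
  have mbpP : bp ∈ P.support := P.end_mem_support
  have mbrR : br ∈ R.support := R.end_mem_support
  have nbpQ : bp ∉ Q.support := fun h => ne_abp (hPQ bp mbpP h).symm
  have nbrQ : br ∉ Q.support := fun h => ne_abr (hQR br h mbrR).symm
  intro i hi j hj ha
  rcases hedge _ _ ha with h | h | h | h | h | h
  · have e1 := hPQ _ (P.fst_mem_support_of_mem_edges h) (mQi i)
    have e2 := hPQ _ (P.snd_mem_support_of_mem_edges h) (mQi j)
    exact absurd (e1.trans e2.symm) ha.ne
  · exact own_edge hQ hi hj h
  · have e1 := hQR _ (mQi i) (R.fst_mem_support_of_mem_edges h)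
    have e2 := hQR _ (mQi j) (R.snd_mem_support_of_mem_edges h)
    exact absurd (e1.trans e2.symm) ha.ne
  · rcases Sym2.eq_iff.mp h with ⟨h1, h2⟩ | ⟨h1, h2⟩
    · exact absurd (show bp ∈ Q.support by rw [← h1]; exact mQi i) nbpQ
    · exact absurd (show bp ∈ Q.support by rw [← h2]; exact mQi j) nbpQ
  · rcases Sym2.eq_iff.mp h with ⟨h1, h2⟩ | ⟨h1, h2⟩
    · exact absurd (show bp ∈ Q.support by rw [← h1]; exact mQi i) nbpQ
    · exact absurd (show br ∈ Q.support by rw [← h1]; exact mQi i) nbrQ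
  · rcases Sym2.eq_iff.mp h with ⟨h1, h2⟩ | ⟨h1, h2⟩
    · exact absurd (show br ∈ Q.support by rw [← h2]; exact mQi j) nbrQ
    · exact absurd (show br ∈ Q.support by rw [← h1]; exact mQi i) nbrQ

lemma pyramid_pair (h2p3 : IndFree H twoP3) (h4 : IndFree H (cycleG 4))
    (h6 : IndFree H (cycleG 6)) (h7 : IndFree H (cycleG 7))
    {a bp bq br : W}
    (P : H.Walk a bp) (Q : H.Walk a bq) (R : H.Walk a br)
    (tpq : H.Adj bp bq) (tpr : H.Adj bp br) (tqr : H.Adj bq br)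
    (hP : P.IsPath) (hQ : Q.IsPath) (hR : R.IsPath)
    (hlP : 1 ≤ P.length) (hlQ : 2 ≤ Q.length) (hlR : 2 ≤ R.length)
    (hPQ : ∀ v, v ∈ P.support → v ∈ Q.support → v = a)
    (hPR : ∀ v, v ∈ P.support → v ∈ R.support → v = a)
    (hQR : ∀ v, v ∈ Q.support → v ∈ R.support → v = a)
    (hedge : ∀ u v, H.Adj u v → s(u, v) ∈ P.edges ∨ s(u, v) ∈ Q.edges ∨ s(u, v) ∈ R.edges ∨
      s(u, v) = s(bp, bq) ∨ s(u, v) = s(bp, br) ∨ s(u, v) = s(bq, br)) :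
    Q.length + R.length = 4 := by
  set q := Q.length with hqd
  set r := R.length with hrd
  have hQa : Q.getVert 0 = a := Q.getVert_zero
  have hQb : Q.getVert q = bq := Q.getVert_length
  have hRa : R.getVert 0 = a := R.getVert_zero
  have hRb : R.getVert r = br := R.getVert_length
  have mQi : ∀ i, Q.getVert i ∈ Q.support := getVert_mem_support Q
  have mRi : ∀ i, R.getVert i ∈ R.support := getVert_mem_support R
  have ne_abr : a ≠ br := path_ends_ne hR (by omega)
  have mbrR : br ∈ R.support := R.end_mem_support
  have nbrQ : br ∉ Q.support := fun h => ne_abr (hQR br h mbrR).symm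
  have Qidx0 : ∀ i, i ≤ q → Q.getVert i = a → i = 0 := fun i hi h =>
    getVert_injOn' hQ i hi 0 (by omega) (h.trans hQa.symm)
  have noab := pyr_noab P Q R tpq tpr tqr hP hQ hR hlP (by omega) hlR hPQ hPR hQR hedge
  have step := pyr_step P Q R tpq tpr tqr hP hQ hR hlP (by omega) (by omega) hPQ hPR hQR hedge
  have Rind := pyr_ind P R Q tpr tpq tqr.symm hP hR hQ hlP (by omega) (by omega) hPR hPQ
    (fun v h1 h2 => hQR v h2 h1)
    (fun u v huv => by
      have := hedge u v huv
      rw [show s(bq, br) = s(br, bq) from Sym2.eq_swap] at this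
      tauto)
  have Qind := pyr_ind P Q R tpq tpr tqr hP hQ hR hlP (by omega) (by omega) hPQ hPR hQR hedge
  have cross := pyr_cross P Q R tpq tpr tqr hP hQ hR hlP (by omega) (by omega) hPQ hPR hQR hedge
  set f : ℕ → W := fun k => if k ≤ q then Q.getVert k else br with hf
  have hfval : ∀ k, k ≤ q → f k = Q.getVert k := by intro k hk; simp [hf, hk]
  have hfb : ∀ k, q < k → f k = br := by
    intro k hk; simp only [hf]; rw [if_neg (by omega)]
  have key : (q + 1) + r = 5 := by
    apply twoPath h2p3 h4 h6 h7 (by omega) (by omega) f R.getVert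
    · rw [hfval 0 (by omega), hQa, hRa]
    · rw [hfb (q + 1) (by omega), hRb]
    · rw [hfval 0 (by omega), hfb (q + 1) (by omega), hQa]
      exact noab
    · -- f injective
      intro i hi j hj he
      rcases Nat.lt_or_ge i (q + 1) with h1 | h1 <;> rcases Nat.lt_or_ge j (q + 1) with h2 | h2
      · rw [hfval i (by omega), hfval j (by omega)] at he
        exact getVert_injOn' hQ i (by omega) j (by omega) he
      · rw [hfval i (by omega), hfb j (by omega)] at he
        exact absurd (show br ∈ Q.support by rw [← he]; exact mQi i) nbrQ
      · rw [hfval j (by omega), hfb i (by omega)] at he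
        exact absurd (show br ∈ Q.support by rw [he]; exact mQi j) nbrQ
      · omega
    · exact getVert_injOn' hR
    · -- interior disjointness
      intro i hi1 hi2 j hj1 hj2 he
      rw [hfval i (by omega)] at he
      have : Q.getVert i ∈ R.support := by rw [he]; exact mRi j
      have := Qidx0 i (by omega) (hQR _ (mQi i) this)
      omega
    · -- f consecutive
      intro i hi
      rcases Nat.lt_or_ge i q with h1 | h1
      · rw [hfval i (by omega), hfval (i + 1) (by omega)]
        exact Q.adj_getVert_succ h1
      · have hiq : i = q := by omega
        rw [hiq, hfval q le_rfl, hfb (q + 1) (by omega), hQb]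
        exact tqr
    · exact fun i hi => R.adj_getVert_succ hi
    · -- f induced
      intro i hi j hj ha
      rcases Nat.lt_or_ge i (q + 1) with h1 | h1 <;> rcases Nat.lt_or_ge j (q + 1) with h2 | h2
      · rw [hfval i (by omega), hfval j (by omega)] at ha
        exact Qind i (by omega) j (by omega) ha
      · rw [hfval i (by omega), hfb j (by omega)] at ha
        rcases Nat.eq_zero_or_pos i with rfl | hi0
        · rw [hQa] at ha
          exact absurd ha noab
        · have := step i hi0 (by omega) ha
          omega
      · rw [hfval j (by omega), hfb i (by omega)] at ha
        rcases Nat.eq_zero_or_pos j with rfl | hj0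
        · rw [hQa] at ha
          exact absurd ha.symm noab
        · have := step j hj0 (by omega) ha.symm
          omega
      · rw [hfb i (by omega), hfb j (by omega)] at ha
        exact absurd rfl ha.ne
    · -- R induced
      exact Rind
    · -- no cross edges
      intro i hi1 hi2 j hj1 hj2 ha
      rw [hfval i (by omega)] at ha
      exact cross i hi1 (by omega) j hj1 hj2 ha
  omega

set_option maxHeartbeats 2000000 in
lemma pyramid_pent (hpent : IndFree H (pentagon 3))
    {a bp bq br : W}
    (P : H.Walk a bp) (Q : H.Walk a bq) (R : H.Walk a br)
    (tpq : H.Adj bp bq) (tpr : H.Adj bp br) (tqr : H.Adj bq br)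
    (hP : P.IsPath) (hQ : Q.IsPath) (hR : R.IsPath)
    (hP2 : P.length = 2) (hQ2 : Q.length = 2) (hR2 : R.length = 2)
    (hPQ : ∀ v, v ∈ P.support → v ∈ Q.support → v = a)
    (hPR : ∀ v, v ∈ P.support → v ∈ R.support → v = a)
    (hQR : ∀ v, v ∈ Q.support → v ∈ R.support → v = a)
    (hedge : ∀ u v, H.Adj u v → s(u, v) ∈ P.edges ∨ s(u, v) ∈ Q.edges ∨ s(u, v) ∈ R.edges ∨
      s(u, v) = s(bp, bq) ∨ s(u, v) = s(bp, br) ∨ s(u, v) = s(bq, br)) :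
    False := by
  set m1 := P.getVert 1 with hm1
  set m2 := Q.getVert 1 with hm2
  set m3 := R.getVert 1 with hm3
  have ePb : P.getVert 2 = bp := by rw [← hP2]; exact P.getVert_length
  have eQb : Q.getVert 2 = bq := by rw [← hQ2]; exact Q.getVert_length
  have eRb : R.getVert 2 = br := by rw [← hR2]; exact R.getVert_length
  -- hedge wrappers for permutations
  have hedgePRQ : ∀ u v, H.Adj u v → s(u, v) ∈ P.edges ∨ s(u, v) ∈ R.edges ∨
      s(u, v) ∈ Q.edges ∨ s(u, v) = s(bp, br) ∨ s(u, v) = s(bp, bq) ∨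
      s(u, v) = s(br, bq) := by
    intro u v huv
    have := hedge u v huv
    rw [show s(bq, br) = s(br, bq) from Sym2.eq_swap] at this
    tauto
  have hedgeQPR : ∀ u v, H.Adj u v → s(u, v) ∈ Q.edges ∨ s(u, v) ∈ P.edges ∨
      s(u, v) ∈ R.edges ∨ s(u, v) = s(bq, bp) ∨ s(u, v) = s(bq, br) ∨
      s(u, v) = s(bp, br) := by
    intro u v huv
    have := hedge u v huv
    rw [show s(bp, bq) = s(bq, bp) from Sym2.eq_swap] at this
    tauto
  have hedgeQRP : ∀ u v, H.Adj u v → s(u, v) ∈ Q.edges ∨ s(u, v) ∈ R.edges ∨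
      s(u, v) ∈ P.edges ∨ s(u, v) = s(bq, br) ∨ s(u, v) = s(bq, bp) ∨
      s(u, v) = s(br, bp) := by
    intro u v huv
    have := hedge u v huv
    rw [show s(bp, bq) = s(bq, bp) from Sym2.eq_swap,
      show s(bp, br) = s(br, bp) from Sym2.eq_swap] at this
    tauto
  have hedgeRPQ : ∀ u v, H.Adj u v → s(u, v) ∈ R.edges ∨ s(u, v) ∈ P.edges ∨
      s(u, v) ∈ Q.edges ∨ s(u, v) = s(br, bp) ∨ s(u, v) = s(br, bq) ∨
      s(u, v) = s(bp, bq) := by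
    intro u v huv
    have := hedge u v huv
    rw [show s(bp, br) = s(br, bp) from Sym2.eq_swap,
      show s(bq, br) = s(br, bq) from Sym2.eq_swap] at this
    tauto
  have hedgeRQP : ∀ u v, H.Adj u v → s(u, v) ∈ R.edges ∨ s(u, v) ∈ Q.edges ∨
      s(u, v) ∈ P.edges ∨ s(u, v) = s(br, bq) ∨ s(u, v) = s(br, bp) ∨
      s(u, v) = s(bq, bp) := by
    intro u v huv
    have := hedge u v huv
    rw [show s(bp, br) = s(br, bp) from Sym2.eq_swap,
      show s(bq, br) = s(br, bq) from Sym2.eq_swap,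
      show s(bp, bq) = s(bq, bp) from Sym2.eq_swap] at this
    tauto
  -- positive adjacencies
  have A1 : H.Adj a m1 := by
    have := P.adj_getVert_succ (show 0 < P.length by omega)
    rwa [P.getVert_zero] at this
  have A2 : H.Adj a m2 := by
    have := Q.adj_getVert_succ (show 0 < Q.length by omega)
    rwa [Q.getVert_zero] at this
  have A3 : H.Adj a m3 := by
    have := R.adj_getVert_succ (show 0 < R.length by omega)
    rwa [R.getVert_zero] at this
  have B1 : H.Adj m1 bp := by
    have := P.adj_getVert_succ (show 1 < P.length by omega)
    rwa [ePb] at this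
  have B2 : H.Adj m2 bq := by
    have := Q.adj_getVert_succ (show 1 < Q.length by omega)
    rwa [eQb] at this
  have B3 : H.Adj m3 br := by
    have := R.adj_getVert_succ (show 1 < R.length by omega)
    rwa [eRb] at this
  -- negative adjacencies
  have nab_r : ¬ H.Adj a br :=
    pyr_noab P Q R tpq tpr tqr hP hQ hR (by omega) (by omega) (by omega) hPQ hPR hQR hedge
  have nab_q : ¬ H.Adj a bq :=
    pyr_noab P R Q tpr tpq tqr.symm hP hR hQ (by omega) (by omega) (by omega) hPR hPQ
      (fun v h1 h2 => hQR v h2 h1) hedgePRQ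
  have nab_p : ¬ H.Adj a bp :=
    pyr_noab Q R P tqr tpq.symm tpr.symm hQ hR hP (by omega) (by omega) (by omega)
      (fun v h1 h2 => hQR v h1 h2) (fun v h1 h2 => hPQ v h2 h1) (fun v h1 h2 => hPR v h2 h1)
      (fun u v huv => by
        have := hedge u v huv
        rw [show s(bp, bq) = s(bq, bp) from Sym2.eq_swap,
          show s(bp, br) = s(br, bp) from Sym2.eq_swap] at this
        tauto)
  have nc_23 : ¬ H.Adj m2 m3 :=
    pyr_cross P Q R tpq tpr tqr hP hQ hR (by omega) (by omega) (by omega) hPQ hPR hQR hedge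
      1 (by omega) (by omega) 1 (by omega) (by omega)
  have nc_12 : ¬ H.Adj m1 m2 :=
    pyr_cross R P Q tpr.symm tqr.symm tpq hR hP hQ (by omega) (by omega) (by omega)
      (fun v h1 h2 => hPR v h2 h1) (fun v h1 h2 => hQR v h2 h1) hPQ
      (fun u v huv => by
        have := hedge u v huv
        rw [show s(bp, br) = s(br, bp) from Sym2.eq_swap,
          show s(bq, br) = s(br, bq) from Sym2.eq_swap] at this
        tauto)
      1 (by omega) (by omega) 1 (by omega) (by omega)
  have nc_13 : ¬ H.Adj m1 m3 :=
    pyr_cross Q P R tpq.symm tqr tpr hQ hP hR (by omega) (by omega) (by omega)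
      (fun v h1 h2 => hPQ v h2 h1) hQR hPR hedgeQPR
      1 (by omega) (by omega) 1 (by omega) (by omega)
  have n_m1bq : ¬ H.Adj m1 bq := fun h => by
    have := pyr_step R P Q tpr.symm tqr.symm tpq hR hP hQ (by omega) (by omega) (by omega)
      (fun v h1 h2 => hPR v h2 h1) (fun v h1 h2 => hQR v h2 h1) hPQ hedgeRPQ
      1 (by omega) (by omega) h
    omega
  have n_m1br : ¬ H.Adj m1 br := fun h => by
    have := pyr_step Q P R tpq.symm tqr tpr hQ hP hR (by omega) (by omega) (by omega)
      (fun v h1 h2 => hPQ v h2 h1) hQR hPR hedgeQPR 1 (by omega) (by omega) h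
    omega
  have n_m2bp : ¬ H.Adj m2 bp := fun h => by
    have := pyr_step R Q P tqr.symm tpr.symm tpq.symm hR hQ hP (by omega) (by omega) (by omega)
      (fun v h1 h2 => hQR v h2 h1) (fun v h1 h2 => hPR v h2 h1) (fun v h1 h2 => hPQ v h2 h1)
      hedgeRQP 1 (by omega) (by omega) h
    omega
  have n_m2br : ¬ H.Adj m2 br := fun h => by
    have := pyr_step P Q R tpq tpr tqr hP hQ hR (by omega) (by omega) (by omega) hPQ hPR hQR
      hedge 1 (by omega) (by omega) h
    omega
  have n_m3bp : ¬ H.Adj m3 bp := fun h => by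
    have := pyr_step Q R P tqr tpq.symm tpr.symm hQ hR hP (by omega) (by omega) (by omega)
      hQR (fun v h1 h2 => hPQ v h2 h1) (fun v h1 h2 => hPR v h2 h1) hedgeQRP
      1 (by omega) (by omega) h
    omega
  have n_m3bq : ¬ H.Adj m3 bq := fun h => by
    have := pyr_step P R Q tpr tpq tqr.symm hP hR hQ (by omega) (by omega) (by omega)
      hPR hPQ (fun v h1 h2 => hQR v h2 h1) hedgePRQ 1 (by omega) (by omega) h
    omega
  -- distinctness
  have mPi : ∀ i, P.getVert i ∈ P.support := getVert_mem_support P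
  have mQi : ∀ i, Q.getVert i ∈ Q.support := getVert_mem_support Q
  have mRi : ∀ i, R.getVert i ∈ R.support := getVert_mem_support R
  have ne_abp : a ≠ bp := path_ends_ne hP (by omega)
  have ne_abq : a ≠ bq := path_ends_ne hQ (by omega)
  have ne_abr : a ≠ br := path_ends_ne hR (by omega)
  have ne_am1 : a ≠ m1 := fun h =>
    by have := getVert_injOn' hP 0 (by omega) 1 (by omega) (P.getVert_zero.trans h); omega
  have ne_am2 : a ≠ m2 := fun h =>
    by have := getVert_injOn' hQ 0 (by omega) 1 (by omega) (Q.getVert_zero.trans h); omega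
  have ne_am3 : a ≠ m3 := fun h =>
    by have := getVert_injOn' hR 0 (by omega) 1 (by omega) (R.getVert_zero.trans h); omega
  have ne_m1bp : m1 ≠ bp := fun h =>
    by have := getVert_injOn' hP 1 (by omega) 2 (by omega) (h.trans ePb.symm); omega
  have ne_m2bq : m2 ≠ bq := fun h =>
    by have := getVert_injOn' hQ 1 (by omega) 2 (by omega) (h.trans eQb.symm); omega
  have ne_m3br : m3 ≠ br := fun h =>
    by have := getVert_injOn' hR 1 (by omega) 2 (by omega) (h.trans eRb.symm); omega
  have ne_m1m2 : m1 ≠ m2 := fun h => by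
    have e := hPQ _ (mPi 1) (by show m1 ∈ Q.support; rw [h]; exact mQi 1)
    have := getVert_injOn' hP 1 (by omega) 0 (by omega) (e.trans P.getVert_zero.symm)
    omega
  have ne_m1m3 : m1 ≠ m3 := fun h => by
    have e := hPR _ (mPi 1) (by show m1 ∈ R.support; rw [h]; exact mRi 1)
    have := getVert_injOn' hP 1 (by omega) 0 (by omega) (e.trans P.getVert_zero.symm)
    omega
  have ne_m2m3 : m2 ≠ m3 := fun h => by
    have e := hQR _ (mQi 1) (by show m2 ∈ R.support; rw [h]; exact mRi 1)
    have := getVert_injOn' hQ 1 (by omega) 0 (by omega) (e.trans Q.getVert_zero.symm)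
    omega
  have ne_m1bq : m1 ≠ bq := fun h => by
    have e := hPQ _ (mPi 1) (by show m1 ∈ Q.support; rw [h]; exact Q.end_mem_support)
    have := getVert_injOn' hP 1 (by omega) 0 (by omega) (e.trans P.getVert_zero.symm)
    omega
  have ne_m1br : m1 ≠ br := fun h => by
    have e := hPR _ (mPi 1) (by show m1 ∈ R.support; rw [h]; exact R.end_mem_support)
    have := getVert_injOn' hP 1 (by omega) 0 (by omega) (e.trans P.getVert_zero.symm)
    omega
  have ne_m2bp : m2 ≠ bp := fun h => by
    have e := hPQ _ (by show m2 ∈ P.support; rw [h]; exact P.end_mem_support) (mQi 1)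
    have := getVert_injOn' hQ 1 (by omega) 0 (by omega) (e.trans Q.getVert_zero.symm)
    omega
  have ne_m2br : m2 ≠ br := fun h => by
    have e := hQR _ (mQi 1) (by show m2 ∈ R.support; rw [h]; exact R.end_mem_support)
    have := getVert_injOn' hQ 1 (by omega) 0 (by omega) (e.trans Q.getVert_zero.symm)
    omega
  have ne_m3bp : m3 ≠ bp := fun h => by
    have e := hPR _ (by show m3 ∈ P.support; rw [h]; exact P.end_mem_support) (mRi 1)
    have := getVert_injOn' hR 1 (by omega) 0 (by omega) (e.trans R.getVert_zero.symm)
    omega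
  have ne_m3bq : m3 ≠ bq := fun h => by
    have e := hQR _ (by show m3 ∈ Q.support; rw [h]; exact Q.end_mem_support) (mRi 1)
    have := getVert_injOn' hR 1 (by omega) 0 (by omega) (e.trans R.getVert_zero.symm)
    omega
  have ne_bpbq : bp ≠ bq := tpq.ne
  have ne_bpbr : bp ≠ br := tpr.ne
  have ne_bqbr : bq ≠ br := tqr.ne
  -- symmetric versions
  have A1' := A1.symm
  have A2' := A2.symm
  have A3' := A3.symm
  have B1' := B1.symm
  have B2' := B2.symm
  have B3' := B3.symm
  have tpq' := tpq.symm
  have tpr' := tpr.symm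
  have tqr' := tqr.symm
  have nab_p' : ¬ H.Adj bp a := fun h => nab_p h.symm
  have nab_q' : ¬ H.Adj bq a := fun h => nab_q h.symm
  have nab_r' : ¬ H.Adj br a := fun h => nab_r h.symm
  have nc_12' : ¬ H.Adj m2 m1 := fun h => nc_12 h.symm
  have nc_13' : ¬ H.Adj m3 m1 := fun h => nc_13 h.symm
  have nc_23' : ¬ H.Adj m3 m2 := fun h => nc_23 h.symm
  have n_m1bq' : ¬ H.Adj bq m1 := fun h => n_m1bq h.symm
  have n_m1br' : ¬ H.Adj br m1 := fun h => n_m1br h.symm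
  have n_m2bp' : ¬ H.Adj bp m2 := fun h => n_m2bp h.symm
  have n_m2br' : ¬ H.Adj br m2 := fun h => n_m2br h.symm
  have n_m3bp' : ¬ H.Adj bp m3 := fun h => n_m3bp h.symm
  have n_m3bq' : ¬ H.Adj bq m3 := fun h => n_m3bq h.symm
  have irr_a : ¬ H.Adj a a := H.irrefl
  have irr_1 : ¬ H.Adj m1 m1 := H.irrefl
  have irr_2 : ¬ H.Adj m2 m2 := H.irrefl
  have irr_3 : ¬ H.Adj m3 m3 := H.irrefl
  have irr_p : ¬ H.Adj bp bp := H.irrefl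
  have irr_q : ¬ H.Adj bq bq := H.irrefl
  have irr_r : ¬ H.Adj br br := H.irrefl
  set F : Unit ⊕ Fin 3 ⊕ Fin 3 → W := fun x =>
    match x with
    | Sum.inl _ => a
    | Sum.inr (Sum.inl i) => if i = 0 then m1 else if i = 1 then m2 else m3
    | Sum.inr (Sum.inr i) => if i = 0 then bp else if i = 1 then bq else br
    with hF
  have eA : F (Sum.inl ()) = a := rfl
  have eM0 : F (Sum.inr (Sum.inl 0)) = m1 := rfl
  have eM1 : F (Sum.inr (Sum.inl 1)) = m2 := rfl
  have eM2 : F (Sum.inr (Sum.inl 2)) = m3 := rfl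
  have eB0 : F (Sum.inr (Sum.inr 0)) = bp := rfl
  have eB1 : F (Sum.inr (Sum.inr 1)) = bq := rfl
  have eB2 : F (Sum.inr (Sum.inr 2)) = br := rfl
  refine hpent.elim ⟨⟨F, ?_⟩, ?_⟩
  · intro x y h
    fin_cases x <;> fin_cases y <;>
      simp only [eA, eM0, eM1, eM2, eB0, eB1, eB2] at h ⊢ <;>
      first
      | rfl
      | (exact absurd h (by assumption))
      | (exact absurd h.symm (by assumption))
  · intro x y
    fin_cases x <;> fin_cases y <;>
      (try simp only [eA, eM0, eM1, eM2, eB0, eB1, eB2]) <;>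
      constructor <;> intro h <;>
      first
      | assumption
      | decide
      | (exact absurd h (by assumption))
      | (exfalso; revert h; decide)

lemma pyramid_c4 (h4 : IndFree H (cycleG 4))
    {a bp bq br : W}
    (P : H.Walk a bp) (Q : H.Walk a bq) (R : H.Walk a br)
    (tpq : H.Adj bp bq) (tpr : H.Adj bp br) (tqr : H.Adj bq br)
    (hP : P.IsPath) (hQ : Q.IsPath) (hR : R.IsPath)
    (hP1 : P.length = 1) (hQ2 : Q.length = 2) (hR2 : 2 ≤ R.length)
    (hPQ : ∀ v, v ∈ P.support → v ∈ Q.support → v = a)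
    (hPR : ∀ v, v ∈ P.support → v ∈ R.support → v = a)
    (hQR : ∀ v, v ∈ Q.support → v ∈ R.support → v = a)
    (hedge : ∀ u v, H.Adj u v → s(u, v) ∈ P.edges ∨ s(u, v) ∈ Q.edges ∨ s(u, v) ∈ R.edges ∨
      s(u, v) = s(bp, bq) ∨ s(u, v) = s(bp, br) ∨ s(u, v) = s(bq, br)) :
    False := by
  have ePb : P.getVert 1 = bp := by rw [← hP1]; exact P.getVert_length
  have eQb : Q.getVert 2 = bq := by rw [← hQ2]; exact Q.getVert_length
  have Aab : H.Adj a bp := by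
    have := P.adj_getVert_succ (show 0 < P.length by omega)
    rwa [P.getVert_zero, ePb] at this
  have Abqm : H.Adj bq (Q.getVert 1) := by
    have := Q.adj_getVert_succ (show 1 < Q.length by omega)
    rw [eQb] at this
    exact this.symm
  have Ama : H.Adj (Q.getVert 1) a := by
    have := Q.adj_getVert_succ (show 0 < Q.length by omega)
    rw [Q.getVert_zero] at this
    exact this.symm
  have nab_q : ¬ H.Adj a bq :=
    pyr_noab P R Q tpr tpq tqr.symm hP hR hQ (by omega) (by omega) (by omega) hPR hPQ
      (fun v h1 h2 => hQR v h2 h1)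
      (fun u v huv => by
        have := hedge u v huv
        rw [show s(bq, br) = s(br, bq) from Sym2.eq_swap] at this
        tauto)
  have n_mbp : ¬ H.Adj bp (Q.getVert 1) := fun h => by
    have := pyr_step R Q P tqr.symm tpr.symm tpq.symm hR hQ hP (by omega) (by omega) (by omega)
      (fun v h1 h2 => hQR v h2 h1) (fun v h1 h2 => hPR v h2 h1) (fun v h1 h2 => hPQ v h2 h1)
      (fun u v huv => by
        have := hedge u v huv
        rw [show s(bp, br) = s(br, bp) from Sym2.eq_swap,
          show s(bq, br) = s(br, bq) from Sym2.eq_swap,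
          show s(bp, bq) = s(bq, bp) from Sym2.eq_swap] at this
        tauto)
      1 (by omega) (by omega) h.symm
    omega
  have e_abq : a ≠ bq := path_ends_ne hQ (by omega)
  have e_bpm : bp ≠ Q.getVert 1 := by
    intro h
    have e := hPQ bp P.end_mem_support (by rw [h]; exact getVert_mem_support Q 1)
    have := getVert_injOn' hQ 1 (by omega) 0 (by omega)
      (by rw [← h, e, Q.getVert_zero])
    omega
  exact c4_helper h4 a bp bq (Q.getVert 1) Aab tpq Abqm Ama nab_q n_mbp e_abq e_bpm

lemma pyramid_core (h2p3 : IndFree H twoP3) (h4 : IndFree H (cycleG 4))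
    (h6 : IndFree H (cycleG 6)) (h7 : IndFree H (cycleG 7))
    (hpent : IndFree H (pentagon 3))
    {a bp bq br : W}
    (P : H.Walk a bp) (Q : H.Walk a bq) (R : H.Walk a br)
    (tpq : H.Adj bp bq) (tpr : H.Adj bp br) (tqr : H.Adj bq br)
    (hP : P.IsPath) (hQ : Q.IsPath) (hR : R.IsPath)
    (hlP : 1 ≤ P.length) (hlQ : 2 ≤ Q.length) (hlR : 2 ≤ R.length)
    (hPQ : ∀ v, v ∈ P.support → v ∈ Q.support → v = a)
    (hPR : ∀ v, v ∈ P.support → v ∈ R.support → v = a)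
    (hQR : ∀ v, v ∈ Q.support → v ∈ R.support → v = a)
    (hedge : ∀ u v, H.Adj u v → s(u, v) ∈ P.edges ∨ s(u, v) ∈ Q.edges ∨ s(u, v) ∈ R.edges ∨
      s(u, v) = s(bp, bq) ∨ s(u, v) = s(bp, br) ∨ s(u, v) = s(bq, br)) :
    False := by
  have e1 := pyramid_pair h2p3 h4 h6 h7 P Q R tpq tpr tqr hP hQ hR hlP hlQ hlR hPQ hPR hQR hedge
  have hq2 : Q.length = 2 := by omega
  have hr2 : R.length = 2 := by omega
  by_cases hp2 : 2 ≤ P.length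
  · have e2 := pyramid_pair h2p3 h4 h6 h7 Q P R tpq.symm tqr tpr hQ hP hR (by omega) hp2 hlR
      (fun v h1 h2 => hPQ v h2 h1) hQR hPR
      (fun u v huv => by
        have := hedge u v huv
        rw [show s(bp, bq) = s(bq, bp) from Sym2.eq_swap] at this
        tauto)
    exact pyramid_pent hpent P Q R tpq tpr tqr hP hQ hR (by omega) hq2 hr2 hPQ hPR hQR hedge
  · exact pyramid_c4 h4 P Q R tpq tpr tqr hP hQ hR (by omega) hq2 (by omega) hPQ hPR hQR hedge

lemma noPyramid (h2p3 : IndFree H twoP3) (h4 : IndFree H (cycleG 4))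
    (h6 : IndFree H (cycleG 6)) (h7 : IndFree H (cycleG 7))
    (hpent : IndFree H (pentagon 3)) : ¬ IsPyramid H := by
  rintro ⟨a, b1, b2, b3, P1, P2, P3, t12, t13, t23, hp1, hp2, hp3, hl1, hl2, hl3, htwo,
    h12, h13, h23, hcov, hedge⟩
  rcases htwo with ⟨hA, hB⟩ | ⟨hA, hB⟩ | ⟨hA, hB⟩
  · exact pyramid_core h2p3 h4 h6 h7 hpent P3 P1 P2 t13.symm t23.symm t12 hp3 hp1 hp2
      hl3 hA hB (fun v h1 h2 => h13 v h2 h1) (fun v h1 h2 => h23 v h2 h1) h12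
      (fun u v huv => by
        have := hedge u v huv
        rw [show s(b1, b3) = s(b3, b1) from Sym2.eq_swap,
          show s(b2, b3) = s(b3, b2) from Sym2.eq_swap] at this
        tauto)
  · exact pyramid_core h2p3 h4 h6 h7 hpent P2 P1 P3 t12.symm t23 t13 hp2 hp1 hp3
      hl2 hA hB (fun v h1 h2 => h12 v h2 h1) h23 h13
      (fun u v huv => by
        have := hedge u v huv
        rw [show s(b1, b2) = s(b2, b1) from Sym2.eq_swap] at this
        tauto)
  · exact pyramid_core h2p3 h4 h6 h7 hpent P1 P2 P3 t12 t13 t23 hp1 hp2 hp3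
      hl1 hA hB h12 h13 h23 hedge

end Pyramid

section Wheel
variable {H : SimpleGraph W}

lemma noProperWheel (h2p3 : IndFree H twoP3) (h4 : IndFree H (cycleG 4))
    (h6 : IndFree H (cycleG 6)) (h7 : IndFree H (cycleG 7)) : ¬ IsProperWheel H := by
  rintro ⟨v, n, e, hn4, hrange, hdeg, hnuniv, hntwin⟩
  classical
  have hn5 : n = 5 := by
    apply hole5 h2p3 h4 h6 h7 hn4 (fun k => e ((k : ℕ) : ZMod n))
    · intro i hi j hj he
      have := e.injective he
      exact (natCast_zmod_inj hi hj).mp this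
    · intro i hi j hj
      rw [e.map_rel_iff]
      exact cyc_adj (by omega) hi hj
  subst hn5
  set T : Finset (ZMod 5) := Finset.univ.filter (fun i => H.Adj v (e i)) with hT
  have hvr : v ∉ Set.range ⇑e := by rw [hrange]; simp
  have hNimg : H.neighborSet v = ⇑e '' (T : Set (ZMod 5)) := by
    ext w
    constructor
    · intro hw
      have hwv : w ≠ v := fun h => H.irrefl (h ▸ hw)
      have : w ∈ Set.range ⇑e := by rw [hrange]; exact hwv
      obtain ⟨i, rfl⟩ := this
      refine ⟨i, ?_, rfl⟩
      simp only [hT, Finset.coe_filter, Set.mem_setOf_eq]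
      exact ⟨Finset.mem_univ i, hw⟩
    · rintro ⟨i, hi, rfl⟩
      simp only [hT, Finset.coe_filter, Set.mem_setOf_eq] at hi
      exact hi.2
  have hcard : (H.neighborSet v).ncard = T.card := by
    rw [hNimg, Set.ncard_image_of_injective _ e.injective, Set.ncard_coe_finset]
  have hT3 : 3 ≤ T.card := by rw [hcard] at hdeg; exact hdeg
  have hTuniv : T ≠ Finset.univ := by
    intro h
    apply hnuniv
    rw [hNimg, h]
    simp only [Finset.coe_univ, Set.image_univ]
    exact hrange
  have hT4 : T.card ≤ 4 := by
    by_contra hc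
    have h5 : T.card = 5 := by
      have := Finset.card_le_univ T
      have : T.card ≤ 5 := by simpa using this
      omega
    exact hTuniv (Finset.eq_univ_of_card T (by simpa using h5))
  have hTtwin : ∀ i : ZMod 5, T ≠ {i, i + 1, i + 2} := by
    intro i hTi
    apply hntwin
    refine ⟨i, ?_⟩
    rw [hNimg, hTi]
    simp [Set.image_insert_eq]
  have claim : ∀ T : Finset (ZMod 5), 3 ≤ T.card → T.card ≤ 4 →
      (∀ i : ZMod 5, T ≠ {i, i + 1, i + 2}) →
      ∃ i, i ∈ T ∧ (i + 1) ∉ T ∧ (i + 2) ∈ T := by decide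
  obtain ⟨i, hi1, hi2, hi3⟩ := claim T hT3 hT4 hTtwin
  have memT : ∀ j : ZMod 5, j ∈ T ↔ H.Adj v (e j) := by
    intro j; simp [hT]
  have cadj : ∀ j : ZMod 5, (cycleG 5).Adj j (j + 1) := by decide
  have cnadj : ∀ j : ZMod 5, ¬ (cycleG 5).Adj j (j + 2) := by decide
  have cne : ∀ j : ZMod 5, j ≠ j + 2 := by decide
  exact c4_helper h4 v (e i) (e (i + 1)) (e (i + 2))
    ((memT i).mp hi1)
    (e.map_rel_iff.mpr (cadj i))
    (e.map_rel_iff.mpr (by have := cadj (i + 1); rwa [add_assoc] at this))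
    (((memT (i + 2)).mp hi3).symm)
    (fun h => hi2 ((memT (i + 1)).mpr h))
    (fun h => cnadj i (e.map_rel_iff.mp h))
    (fun h => hvr ⟨i + 1, h.symm⟩)
    (fun h => cne i (e.injective h))

end Wheel

lemma indfree_induce {G : SimpleGraph V} {X : Type} {K : SimpleGraph X}
    (h : IndFree G K) (S : Set V) : IndFree (G.induce S) K :=
  ⟨fun f => h.elim ((Embedding.induce S).comp f)⟩
theorem statement_11 {V : Type} [Fintype V] (G : SimpleGraph V)
    (hfree : IndFree G twoP3 ∧ IndFree G (cycleG 4) ∧ IndFree G (cycleG 6) ∧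
      IndFree G (cycleG 7) ∧ IndFree G (pentagon 3)) :
    (∀ S : Set V, ¬ IsTheta (G.induce S)) ∧
    (∀ S : Set V, ¬ IsPyramid (G.induce S)) ∧
    (∀ S : Set V, ¬ IsPrism (G.induce S)) ∧
    (∀ S : Set V, ¬ IsProperWheel (G.induce S)) := by
  obtain ⟨h2p3, h4, h6, h7, hpent⟩ := hfree
  exact ⟨fun S => noTheta (indfree_induce h2p3 S) (indfree_induce h4 S)
      (indfree_induce h6 S) (indfree_induce h7 S),
    fun S => noPyramid (indfree_induce h2p3 S) (indfree_induce h4 S)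
      (indfree_induce h6 S) (indfree_induce h7 S) (indfree_induce hpent S),
    fun S => noPrism (indfree_induce h2p3 S) (indfree_induce h4 S)
      (indfree_induce h6 S) (indfree_induce h7 S),
    fun S => noProperWheel (indfree_induce h2p3 S) (indfree_induce h4 S)
      (indfree_induce h6 S) (indfree_induce h7 S)⟩

end Paper
end

section
/- A 5-ring is 4K_1-free if and only if it is 2P_3-free. -/
namespace Paper

open SimpleGraph

variable {V : Type} {W : Type}

section Aux

lemma zmod_shift_ne (x : ZMod 5) {c d : ZMod 5} (h : c ≠ d) : x + c ≠ x + d :=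
  fun he => h (add_left_cancel he)

lemma fourK1_emb_twoP3 : Nonempty (fourK1 ↪g twoP3) := by
  refine ⟨⟨⟨![Sum.inl 0, Sum.inl 2, Sum.inr 0, Sum.inr 2], by decide⟩, ?_⟩⟩
  intro a b
  fin_cases a <;> fin_cases b <;>
    simp [fourK1, twoP3, pathGraph_adj]

set_option maxHeartbeats 1000000 in
lemma build_twoP3 {W : Type} {R : SimpleGraph W} {p u q r w s : W}
    (hpu : R.Adj p u) (huq : R.Adj u q) (hrw : R.Adj r w) (hws : R.Adj w s)
    (hpq : ¬R.Adj p q) (hrs : ¬R.Adj r s)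
    (hpr : ¬R.Adj p r) (hpw : ¬R.Adj p w) (hps : ¬R.Adj p s)
    (hur : ¬R.Adj u r) (huw : ¬R.Adj u w) (hus : ¬R.Adj u s)
    (hqr : ¬R.Adj q r) (hqw : ¬R.Adj q w) (hqs : ¬R.Adj q s)
    (hpq' : p ≠ q) (hrs' : r ≠ s)
    (hpr' : p ≠ r) (hpw' : p ≠ w) (hps' : p ≠ s)
    (hur' : u ≠ r) (huw' : u ≠ w) (hus' : u ≠ s)
    (hqr' : q ≠ r) (hqw' : q ≠ w) (hqs' : q ≠ s) :
    Nonempty (twoP3 ↪g R) := by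
  have hpu' : p ≠ u := hpu.ne
  have huq' : u ≠ q := huq.ne
  have hrw' : r ≠ w := hrw.ne
  have hws' : w ≠ s := hws.ne
  refine ⟨⟨⟨Sum.elim ![p,u,q] ![r,w,s], ?_⟩, ?_⟩⟩
  · rintro (x|x) (y|y) h <;> fin_cases x <;> fin_cases y <;> simp_all
  · rintro (x|x) (y|y) <;> fin_cases x <;> fin_cases y <;>
      simp_all [twoP3, pathGraph_adj, R.adj_comm, DFunLike.coe]

set_option maxRecDepth 4000 in
lemma zmod5_cover (f : Fin 4 → ZMod 5) (hf : Function.Injective f) :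
    ∃ a : ZMod 5, (∃ s, f s = a) ∧ (∃ s, f s = a+1) ∧ (∃ s, f s = a+2) ∧ (∃ s, f s = a+3) := by
  revert hf; revert f; decide

end Aux

theorem statement_13 {W : Type} [Fintype W] (R : SimpleGraph W)
    (hR : IsRing 5 R) :
    IndFree R fourK1 ↔ IndFree R twoP3 := by
  obtain ⟨X, hdisj, hunion, hXne, hdom, hchain, hsub, htop⟩ := hR
  -- two small helpers
  have ring_ne : ∀ {i j : ZMod 5} {x y : W}, x ∈ X i → y ∈ X j → i ≠ j → x ≠ y := by
    intro i j x y hx hy hij he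
    exact Set.disjoint_left.mp (hdisj i j hij) hx (he ▸ hy)
  have ring_not_adj : ∀ {i j : ZMod 5} {x y : W}, x ∈ X i → y ∈ X j →
      j ≠ i - 1 → j ≠ i → j ≠ i + 1 → ¬ R.Adj x y := by
    intro i j x y hx hy h1 h2 h3 hadj
    have hy' : y ∈ X (i-1) ∪ X i ∪ X (i+1) :=
      hsub i x hx (Set.mem_insert_of_mem _ hadj)
    rcases hy' with (hy' | hy') | hy'
    · exact Set.disjoint_left.mp (hdisj j (i-1) h1) hy hy'
    · exact Set.disjoint_left.mp (hdisj j i h2) hy hy'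
    · exact Set.disjoint_left.mp (hdisj j (i+1) h3) hy hy'
  have adj_of_mem : ∀ {x y : W}, y ∈ insert x (R.neighborSet x) → y ≠ x → R.Adj x y := by
    intro x y hm hne
    exact (Set.mem_insert_iff.mp hm).resolve_left hne
  constructor
  · intro h4
    refine ⟨fun e => ?_⟩
    obtain ⟨f0⟩ := fourK1_emb_twoP3
    exact h4.false (e.comp f0)
  · intro h2
    refine ⟨fun e => ?_⟩
    set v : Fin 4 → W := fun k => e k with hv
    have hinj : Function.Injective v := e.injective
    have hnadj : ∀ a b : Fin 4, ¬ R.Adj (v a) (v b) := by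
      intro a b hadj
      have : fourK1.Adj a b := e.map_adj_iff.mp hadj
      simpa [fourK1] using this
    have hmem : ∀ k, ∃ i, v k ∈ X i := by
      intro k
      have : v k ∈ ⋃ i, X i := hunion.symm ▸ Set.mem_univ (v k)
      exact Set.mem_iUnion.mp this
    choose idx hidx using hmem
    have hidxinj : Function.Injective idx := by
      intro a b hab
      by_contra hab'
      have hvab : v a ≠ v b := fun h => hab' (hinj h)
      have : v b ∈ insert (v a) (R.neighborSet (v a)) :=
        hdom (idx a) (v a) (hidx a) (hab ▸ hidx b)
      rcases Set.mem_insert_iff.mp this with h | h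
      · exact hvab h.symm
      · exact hnadj a b h
    obtain ⟨a, ⟨s0, hs0⟩, ⟨s1, hs1⟩, ⟨s2, hs2⟩, ⟨s3, hs3⟩⟩ := zmod5_cover idx hidxinj
    have hP : v s0 ∈ X a := hs0 ▸ hidx s0
    have hQ : v s1 ∈ X (a+1) := hs1 ▸ hidx s1
    have hRv : v s2 ∈ X (a+2) := hs2 ▸ hidx s2
    have hS : v s3 ∈ X (a+3) := hs3 ▸ hidx s3
    obtain ⟨u, hu, hucov⟩ := htop a
    obtain ⟨w, hw, hwcov⟩ := htop (a+3)
    have e32 : a + 3 - 1 = a + 2 := by ring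
    have e34 : a + 3 + 1 = a + 4 := by ring
    rw [e32, e34] at hwcov
    -- adjacencies
    have huQ : R.Adj u (v s1) := by
      refine adj_of_mem (hucov (Set.mem_union_right _ hQ)) ?_
      exact ring_ne hQ hu (by simpa using zmod_shift_ne a (show (1:ZMod 5) ≠ 0 by decide))
    have huP : R.Adj (v s0) u := by
      have hm : v s0 ∈ insert u (R.neighborSet u) :=
        hucov (Set.mem_union_left _ (Set.mem_union_right _ hP))
      have hne0 : v s0 ≠ u := by
        intro he
        have : v s1 ∈ insert (v s0) (R.neighborSet (v s0)) := he ▸ hucov (Set.mem_union_right _ hQ)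
        rcases Set.mem_insert_iff.mp this with h | h
        · exact ring_ne hQ hP (by simpa using zmod_shift_ne a (show (1:ZMod 5) ≠ 0 by decide)) h
        · exact hnadj s0 s1 h
      exact (adj_of_mem hm hne0).symm
    have hwR : R.Adj (v s2) w := by
      have hm : v s2 ∈ insert w (R.neighborSet w) :=
        hwcov (Set.mem_union_left _ (Set.mem_union_left _ hRv))
      have : v s2 ≠ w :=
        ring_ne hRv hw (zmod_shift_ne a (show (2:ZMod 5) ≠ 3 by decide))
      exact (adj_of_mem hm this).symm
    have hwS : R.Adj w (v s3) := by
      have hm : v s3 ∈ insert w (R.neighborSet w) :=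
        hwcov (Set.mem_union_left _ (Set.mem_union_right _ hS))
      have hne0 : v s3 ≠ w := by
        intro he
        have : v s2 ∈ insert (v s3) (R.neighborSet (v s3)) :=
          he ▸ hwcov (Set.mem_union_left _ (Set.mem_union_left _ hRv))
        rcases Set.mem_insert_iff.mp this with h | h
        · exact ring_ne hRv hS (zmod_shift_ne a (show (2:ZMod 5) ≠ 3 by decide)) h
        · exact hnadj s3 s2 h
      exact adj_of_mem hm hne0
    -- side conditions for non-adjacency across the ring
    have c1 : ∀ x : ZMod 5, x + 2 ≠ x - 1 := by
      intro x h; rw [sub_eq_add_neg] at h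
      exact zmod_shift_ne x (show (2:ZMod 5) ≠ -1 by decide) h
    have c2 : ∀ x : ZMod 5, x + 2 ≠ x := by
      intro x h
      exact zmod_shift_ne x (show (2:ZMod 5) ≠ 0 by decide) (by simpa using h)
    have c3 : ∀ x : ZMod 5, x + 2 ≠ x + 1 :=
      fun x => zmod_shift_ne x (show (2:ZMod 5) ≠ 1 by decide)
    have d1 : ∀ x : ZMod 5, x + 3 ≠ x - 1 := by
      intro x h; rw [sub_eq_add_neg] at h
      exact zmod_shift_ne x (show (3:ZMod 5) ≠ -1 by decide) h
    have d2 : ∀ x : ZMod 5, x + 3 ≠ x := by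
      intro x h
      exact zmod_shift_ne x (show (3:ZMod 5) ≠ 0 by decide) (by simpa using h)
    have d3 : ∀ x : ZMod 5, x + 3 ≠ x + 1 :=
      fun x => zmod_shift_ne x (show (3:ZMod 5) ≠ 1 by decide)
    have e1 : a + 3 ≠ (a + 1) - 1 := by
      intro h
      exact d2 a (by rw [h]; ring)
    have e3 : a + 3 ≠ (a + 1) + 1 :=
      fun h => zmod_shift_ne a (show (3:ZMod 5) ≠ 2 by decide) (by rw [h]; ring)
    -- distinctness side conditions
    have n01 : a ≠ a + 1 := by simpa using zmod_shift_ne a (show (0:ZMod 5) ≠ 1 by decide)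
    have n23 : a + 2 ≠ a + 3 := zmod_shift_ne a (show (2:ZMod 5) ≠ 3 by decide)
    have n02 : a ≠ a + 2 := by simpa using zmod_shift_ne a (show (0:ZMod 5) ≠ 2 by decide)
    have n03 : a ≠ a + 3 := by simpa using zmod_shift_ne a (show (0:ZMod 5) ≠ 3 by decide)
    have n12 : a + 1 ≠ a + 2 := zmod_shift_ne a (show (1:ZMod 5) ≠ 2 by decide)
    have n13 : a + 1 ≠ a + 3 := zmod_shift_ne a (show (1:ZMod 5) ≠ 3 by decide)
    obtain ⟨emb⟩ := build_twoP3 (p := v s0) (u := u) (q := v s1) (r := v s2) (w := w) (s := v s3)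
      huP huQ hwR hwS
      (hnadj s0 s1) (hnadj s2 s3)
      (hnadj s0 s2)
      (ring_not_adj hP hw (d1 a) (d2 a) (d3 a))
      (hnadj s0 s3)
      (ring_not_adj hu hRv (c1 a) (c2 a) (c3 a))
      (ring_not_adj hu hw (d1 a) (d2 a) (d3 a))
      (ring_not_adj hu hS (d1 a) (d2 a) (d3 a))
      (hnadj s1 s2)
      (ring_not_adj hQ hw e1 n13.symm e3)
      (hnadj s1 s3)
      (ring_ne hP hQ n01) (ring_ne hRv hS n23)
      (ring_ne hP hRv n02) (ring_ne hP hw n03) (ring_ne hP hS n03)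
      (ring_ne hu hRv n02) (ring_ne hu hw n03) (ring_ne hu hS n03)
      (ring_ne hQ hRv n12) (ring_ne hQ hw n13) (ring_ne hQ hS n13)
    exact h2.false emb


end Paper
end

section
/- Let G be a graph, and let S be the set of all vertices x of G such that the subgraph of G induced by the neighborhood of x contains a stable set of size 3 (equivalently, x has three pairwise nonadjacent neighbors). If S is a clique, then G is T_0-free. -/
namespace Paper

open SimpleGraph

variable {V : Type} {W : Type}

theorem statement_15 {V : Type} [Fintype V] (G : SimpleGraph V)
    (h : G.IsClique {x : V | ∃ y z w : V, G.Adj x y ∧ G.Adj x z ∧ G.Adj x w ∧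
      y ≠ z ∧ y ≠ w ∧ z ≠ w ∧ ¬ G.Adj y z ∧ ¬ G.Adj y w ∧ ¬ G.Adj z w}) :
    IndFree G T0 := by
  constructor
  intro f
  have hadj : ∀ a b : Fin 9, T0.Adj a b → G.Adj (f a) (f b) := fun a b hab =>
    f.map_adj_iff.mpr hab
  have hinj : Function.Injective f := f.injective
  have hne : ∀ a b : Fin 9, a ≠ b → f a ≠ f b := fun a b hab h => hab (hinj h)
  have hnadj : ∀ a b : Fin 9, ¬ T0.Adj a b → ¬ G.Adj (f a) (f b) := fun a b hab h =>
    hab (f.map_adj_iff.mp h)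
  have h0 : f 0 ∈ {x : V | ∃ y z w : V, G.Adj x y ∧ G.Adj x z ∧ G.Adj x w ∧
      y ≠ z ∧ y ≠ w ∧ z ≠ w ∧ ¬ G.Adj y z ∧ ¬ G.Adj y w ∧ ¬ G.Adj z w} := by
    exact ⟨f 2, f 4, f 5, hadj 0 2 (by simp only [T0, SimpleGraph.fromRel_adj]; decide), hadj 0 4 (by simp only [T0, SimpleGraph.fromRel_adj]; decide), hadj 0 5 (by simp only [T0, SimpleGraph.fromRel_adj]; decide),
      hne 2 4 (by decide), hne 2 5 (by decide), hne 4 5 (by decide),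
      hnadj 2 4 (by simp only [T0, SimpleGraph.fromRel_adj]; decide), hnadj 2 5 (by simp only [T0, SimpleGraph.fromRel_adj]; decide), hnadj 4 5 (by simp only [T0, SimpleGraph.fromRel_adj]; decide)⟩
  have h6 : f 6 ∈ {x : V | ∃ y z w : V, G.Adj x y ∧ G.Adj x z ∧ G.Adj x w ∧
      y ≠ z ∧ y ≠ w ∧ z ≠ w ∧ ¬ G.Adj y z ∧ ¬ G.Adj y w ∧ ¬ G.Adj z w} := by
    exact ⟨f 2, f 3, f 7, hadj 6 2 (by simp only [T0, SimpleGraph.fromRel_adj]; decide), hadj 6 3 (by simp only [T0, SimpleGraph.fromRel_adj]; decide), hadj 6 7 (by simp only [T0, SimpleGraph.fromRel_adj]; decide),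
      hne 2 3 (by decide), hne 2 7 (by decide), hne 3 7 (by decide),
      hnadj 2 3 (by simp only [T0, SimpleGraph.fromRel_adj]; decide), hnadj 2 7 (by simp only [T0, SimpleGraph.fromRel_adj]; decide), hnadj 3 7 (by simp only [T0, SimpleGraph.fromRel_adj]; decide)⟩
  exact hnadj 0 6 (by simp only [T0, SimpleGraph.fromRel_adj]; decide) (h h0 h6 (hne 0 6 (by decide)))

end Paper
end

section
/- Let t ≥ 3 be an integer, and let Q be a t-villa with a t-villa partition (A; B_1, …, B_t; C_1, …, C_t). Then every hole in Q contains exactly one vertex of A. -/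
namespace Paper

open SimpleGraph

variable {V : Type} {W : Type}

theorem statement_17 {W : Type} [Fintype W] (t : ℕ) (ht : 3 ≤ t)
    (Q : SimpleGraph W) (A : Set W) (B C : Fin t → Set W)
    (hQ : IsVillaPartition Q A B C) :
    ∀ (n : ℕ), 4 ≤ n → ∀ e : cycleG n ↪g Q, ∃! v, v ∈ A ∧ v ∈ Set.range ⇑e := by
  intro n hn e
  haveI : NeZero n := ⟨by omega⟩
  obtain ⟨hcore, hcover⟩ := hQ
  obtain ⟨hdAB, hdAC, hdBB, hdCC, hdBC, hAcl, hBcl, hCcl, hAne, hBne, hCne, hABc, hACa,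
    hBBa, hCCc, hBCa, hNest, hNdom, hDom⟩ := hcore
  have einj : Function.Injective e := e.injective
  have eadj : ∀ u v : ZMod n, Q.Adj (e u) (e v) ↔ (cycleG n).Adj u v :=
    fun u v => e.map_adj_iff
  -- basic ZMod numeral facts
  have hkz : ∀ k : ℕ, 0 < k → k < n → ((k : ℕ) : ZMod n) ≠ 0 := by
    intro k hk1 hk2 h
    rw [ZMod.natCast_eq_zero_iff] at h
    exact absurd (Nat.le_of_dvd hk1 h) (by omega)
  have h1 : (1 : ZMod n) ≠ 0 := by
    have := hkz 1 (by omega) (by omega); simpa using this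
  have h2 : (2 : ZMod n) ≠ 0 := by
    have := hkz 2 (by omega) (by omega); simpa using this
  have h3 : (3 : ZMod n) ≠ 0 := by
    have := hkz 3 (by omega) (by omega); simpa using this
  -- cycle adjacency
  have adj_iff : ∀ u v : ZMod n, (cycleG n).Adj u v ↔ u ≠ v ∧ (v = u + 1 ∨ u = v + 1) := by
    intro u v
    simp [cycleG, SimpleGraph.fromRel_adj]
  have adjC : ∀ u v : ZMod n, v = u + 1 → (cycleG n).Adj u v := by
    intro u v h
    rw [adj_iff]
    exact ⟨fun hh => h1 (by linear_combination - h - hh), Or.inl h⟩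
  have nadjC : ∀ u v : ZMod n, v = u + 2 → ¬ (cycleG n).Adj u v := by
    intro u v hv h
    rw [adj_iff] at h
    rcases h.2 with h' | h'
    · exact h1 (by linear_combination h' - hv)
    · exact h3 (by linear_combination - h' - hv)
  -- coverage
  have mem3 : ∀ w : W, w ∈ A ∨ (∃ i, w ∈ B i) ∨ (∃ i, w ∈ C i) := by
    intro w
    have hw : w ∈ A ∪ (⋃ i, B i) ∪ ⋃ i, C i := hcover ▸ Set.mem_univ w
    rcases hw with (h | h) | h
    · exact Or.inl h
    · exact Or.inr (Or.inl (Set.mem_iUnion.mp h))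
    · exact Or.inr (Or.inr (Set.mem_iUnion.mp h))
  -- the union of the C's is a clique
  have Cclique : ∀ {i j : Fin t} {c c' : W}, c ∈ C i → c' ∈ C j → c ≠ c' → Q.Adj c c' := by
    intro i j c c' hc hc' hcc
    by_cases hij : i = j
    · subst hij; exact hCcl i hc hc' hcc
    · exact hCCc i j hij c hc c' hc'
  -- Step A: two vertices of A on the hole cannot be consecutive
  have key : ∀ u : ZMod n, e u ∈ A → e (u + 1) ∈ A → False := by
    intro u hu hv
    rcases mem3 (e (u + 2)) with h | ⟨i, h⟩ | ⟨i, h⟩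
    · have hne : e u ≠ e (u + 2) := fun hh => h2 (by linear_combination - (einj hh))
      exact nadjC u (u + 2) rfl ((eadj _ _).mp (hAcl hu h hne))
    · exact nadjC u (u + 2) rfl ((eadj _ _).mp (hABc i _ hu _ h))
    · have hadj : Q.Adj (e (u + 1)) (e (u + 2)) :=
        (eadj _ _).mpr (adjC (u + 1) (u + 2) (by ring))
      exact hACa i _ hv _ h hadj
  have stepA : ∀ u v : ZMod n, e u ∈ A → e v ∈ A → u = v := by
    intro u v hu hv
    by_contra huv
    have hne : e u ≠ e v := fun hh => huv (einj hh)
    have hadj : (cycleG n).Adj u v := (eadj _ _).mp (hAcl hu hv hne)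
    rw [adj_iff] at hadj
    rcases hadj.2 with h' | h'
    · exact key u hu (h' ▸ hv)
    · exact key v hv (h' ▸ hu)
  -- Step B: some vertex of the hole is in A
  have stepB : ∃ u : ZMod n, e u ∈ A := by
    by_contra hA
    push_neg at hA
    have mem2 : ∀ u : ZMod n, (∃ i, e u ∈ B i) ∨ (∃ i, e u ∈ C i) := by
      intro u
      rcases mem3 (e u) with h | h | h
      · exact absurd h (hA u)
      · exact Or.inl h
      · exact Or.inr h
    -- neighbors of a vertex of B i lie in B i ∪ C i
    have nbr : ∀ v w : ZMod n, ∀ i : Fin t, e v ∈ B i → Q.Adj (e v) (e w) →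
        e w ∈ B i ∨ e w ∈ C i := by
      intro v w i hv hadj
      rcases mem2 w with ⟨j, h⟩ | ⟨j, h⟩
      · rcases eq_or_ne j i with rfl | hji
        · exact Or.inl h
        · exact absurd hadj.symm (hBBa j i hji _ h _ hv)
      · rcases eq_or_ne j i with rfl | hji
        · exact Or.inr h
        · exact absurd hadj (hBCa i j (Ne.symm hji) _ hv _ h)
    -- two consecutive B-vertices in the same part lead to a contradiction
    have pairlem : ∀ (v : ZMod n) (i : Fin t), e v ∈ B i → e (v + 1) ∈ B i → False := by
      intro v i hv hv1
      have hadj12 : Q.Adj (e (v + 1)) (e (v + 2)) :=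
        (eadj _ _).mpr (adjC (v + 1) (v + 2) (by ring))
      have hadjm0 : Q.Adj (e (v - 1)) (e v) :=
        (eadj _ _).mpr (adjC (v - 1) v (by ring))
      have h2C : e (v + 2) ∈ C i := by
        rcases nbr (v + 1) (v + 2) i hv1 hadj12 with h | h
        · exfalso
          have hne : e v ≠ e (v + 2) := fun hh => h2 (by linear_combination - (einj hh))
          exact nadjC v (v + 2) rfl ((eadj _ _).mp (hBcl i hv h hne))
        · exact h
      have hm1C : e (v - 1) ∈ C i := by
        rcases nbr v (v - 1) i hv hadjm0.symm with h | h
        · exfalso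
          have hne : e (v - 1) ≠ e (v + 1) := fun hh => h2 (by linear_combination - (einj hh))
          have := hBcl i h hv1 hne
          exact nadjC (v - 1) (v + 1) (by ring) ((eadj _ _).mp this)
        · exact h
      -- use the nested neighborhood condition
      have hmem1 : e (v - 1) ∈ Q.neighborSet (e v) ∩ C i := ⟨hadjm0.symm, hm1C⟩
      have hmem2 : e (v + 2) ∈ Q.neighborSet (e (v + 1)) ∩ C i := ⟨hadj12, h2C⟩
      rcases hNest i (e v) hv (e (v + 1)) hv1 with hsub | hsub
      · have : Q.Adj (e (v + 1)) (e (v - 1)) := (hsub hmem1).1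
        exact nadjC (v - 1) (v + 1) (by ring) ((eadj _ _).mp this).symm
      · have : Q.Adj (e v) (e (v + 2)) := (hsub hmem2).1
        exact nadjC v (v + 2) rfl ((eadj _ _).mp this)
    -- there is a B-vertex on the hole
    have hexB : ∃ (u : ZMod n) (i : Fin t), e u ∈ B i := by
      by_contra hB
      push_neg at hB
      have c0 : ∃ i, e 0 ∈ C i := (mem2 0).resolve_left (by push_neg; exact hB 0)
      have c2 : ∃ i, e 2 ∈ C i := (mem2 2).resolve_left (by push_neg; exact hB 2)
      obtain ⟨i, h0⟩ := c0
      obtain ⟨j, h2'⟩ := c2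
      have hne : e (0 : ZMod n) ≠ e 2 := fun hh => h2 (by linear_combination - (einj hh))
      exact nadjC 0 2 (by ring) ((eadj _ _).mp (Cclique h0 h2' hne))
    obtain ⟨u, i, hu⟩ := hexB
    have hadj01 : Q.Adj (e u) (e (u + 1)) := (eadj _ _).mpr (adjC u (u + 1) rfl)
    have hadjm : Q.Adj (e (u - 1)) (e u) := (eadj _ _).mpr (adjC (u - 1) u (by ring))
    rcases nbr u (u + 1) i hu hadj01 with hB1 | hC1
    · exact pairlem u i hu hB1
    · rcases nbr u (u - 1) i hu hadjm.symm with hBm | hCm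
      · exact pairlem (u - 1) i hBm (by rwa [sub_add_cancel])
      · -- both neighbors in C i : e (u-1) and e (u+1) adjacent but nonconsecutive
        have hne : e (u - 1) ≠ e (u + 1) := fun hh => h2 (by linear_combination - (einj hh))
        exact nadjC (u - 1) (u + 1) (by ring)
          ((eadj _ _).mp (Cclique hCm hC1 hne))
  obtain ⟨u, hu⟩ := stepB
  refine ⟨e u, ⟨hu, ⟨u, rfl⟩⟩, ?_⟩
  rintro w ⟨hwA, v, rfl⟩
  exact congrArg e (stepA v u hwA hu)

end Paper
end
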